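/- arXiv:1305.2471 — 8 statements merged into one kernel-verified Lean document; each statement's English description precedes it below -/
import Mathlib

section
/- (Löwner–Heinz inequality) If A and B are n×n positive semidefinite complex matrices with A ≥ B, then for every r ∈ [0,1], A^r ≥ B^r, where the powers are defined by functional calculus on the spectrum. -/
open Matrix MeasureTheory Set
open scoped ComplexOrder

namespace LoewnerHeinzAux


noncomputable def cr (r : ℝ) : ℝ := ∫ u in Ioi (0:ℝ), u ^ (r-1) * (1 / (1 + u))

variable {r : ℝ}

lemma kernel_meas (a : ℝ) : Measurable (fun l : ℝ => l ^ (r-1) * (a / (a + l))) := by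
  refine Measurable.mul ?_ ?_
  · measurability
  · exact measurable_const.div (measurable_const.add measurable_id)

lemma integrableOn_kernel (hr0 : 0 < r) (hr1 : r < 1) {a : ℝ} (ha : 0 ≤ a) :
    IntegrableOn (fun l : ℝ => l ^ (r-1) * (a / (a + l))) (Ioi (0:ℝ)) := by
  have hmeas := kernel_meas (r := r) a
  have h1 : IntegrableOn (fun l : ℝ => l ^ (r-1) * (a / (a + l))) (Ioc (0:ℝ) 1) := by
    have hg : IntegrableOn (fun l : ℝ => l ^ (r-1)) (Ioc (0:ℝ) 1) := by
      rw [← intervalIntegrable_iff_integrableOn_Ioc_of_le zero_le_one]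
      exact intervalIntegral.intervalIntegrable_rpow' (by linarith)
    refine Integrable.mono' hg hmeas.aestronglyMeasurable.restrict ?_
    refine (ae_restrict_iff' measurableSet_Ioc).mpr (Filter.Eventually.of_forall ?_)
    intro l hl
    have hl0 : 0 < l := hl.1
    have h2 : 0 ≤ a / (a + l) := by positivity
    have h3 : a / (a + l) ≤ 1 := by
      rw [div_le_one (by linarith)]; linarith
    rw [Real.norm_eq_abs, abs_mul, abs_of_nonneg (Real.rpow_nonneg hl0.le _),
      abs_of_nonneg h2]
    nlinarith [Real.rpow_nonneg hl0.le (r-1)]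
  have h2 : IntegrableOn (fun l : ℝ => l ^ (r-1) * (a / (a + l))) (Ioi (1:ℝ)) := by
    have hg : IntegrableOn (fun l : ℝ => a * l ^ (r-2)) (Ioi (1:ℝ)) :=
      ((integrableOn_Ioi_rpow_iff zero_lt_one).mpr (by linarith)).const_mul a
    refine Integrable.mono' hg hmeas.aestronglyMeasurable.restrict ?_
    refine (ae_restrict_iff' measurableSet_Ioi).mpr (Filter.Eventually.of_forall ?_)
    intro l hl
    have hl1 : (1:ℝ) < l := hl
    have hl0 : (0:ℝ) < l := by linarith
    have h2 : 0 ≤ a / (a + l) := by positivity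
    rw [Real.norm_eq_abs, abs_mul, abs_of_nonneg (Real.rpow_nonneg hl0.le _),
      abs_of_nonneg h2]
    have h3 : a / (a + l) ≤ a / l := by
      rw [div_le_div_iff₀ (by linarith) hl0]
      nlinarith
    have h4 : l ^ (r-1) * (a / (a + l)) ≤ l ^ (r-1) * (a / l) :=
      mul_le_mul_of_nonneg_left h3 (Real.rpow_nonneg hl0.le _)
    refine h4.trans (le_of_eq ?_)
    rw [div_eq_mul_inv, ← Real.rpow_neg_one l, ← mul_assoc, mul_comm (l ^ (r-1)) a, mul_assoc,
      ← Real.rpow_add hl0]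
    have : r - 1 + -1 = r - 2 := by ring
    rw [this]
  have := h1.union h2
  rwa [Ioc_union_Ioi_eq_Ioi zero_le_one] at this

lemma kernel_integral (hr0 : 0 < r) (hr1 : r < 1) {a : ℝ} (ha : 0 ≤ a) :
    ∫ l in Ioi (0:ℝ), l ^ (r-1) * (a / (a + l)) = a ^ r * cr r := by
  rcases eq_or_lt_of_le ha with rfl | ha'
  · simp [Real.zero_rpow hr0.ne']
  · have key := integral_comp_mul_left_Ioi (fun l : ℝ => l ^ (r-1) * (a / (a + l))) 0 ha'
    rw [mul_zero] at key
    beta_reduce at key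
    have congr1 : ∫ x in Ioi (0:ℝ), (a*x) ^ (r-1) * (a / (a + a*x))
        = ∫ x in Ioi (0:ℝ), a ^ (r-1) * (x ^ (r-1) * (1 / (1 + x))) := by
      refine setIntegral_congr_fun measurableSet_Ioi fun x hx => ?_
      have hx0 : (0:ℝ) < x := hx
      rw [Real.mul_rpow ha'.le hx0.le]
      have h5 : a / (a + a*x) = 1 / (1 + x) := by
        rw [div_eq_div_iff (by positivity) (by positivity)]
        ring
      rw [h5]; ring
    rw [congr1, integral_const_mul, smul_eq_mul] at key
    have hpow : a * a ^ (r-1) = a ^ r := by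
      have h6 := Real.rpow_add ha' 1 (r-1)
      rw [Real.rpow_one] at h6
      rw [← h6]
      norm_num
    have key2 : a * (a ^ (r-1) * cr r)
        = a * (a⁻¹ * ∫ l in Ioi (0:ℝ), l ^ (r-1) * (a / (a + l))) := by rw [← key]; rfl
    rw [← mul_assoc a (a ^ (r-1)) (cr r), hpow,
      ← mul_assoc a a⁻¹ _, mul_inv_cancel₀ ha'.ne', one_mul] at key2
    exact key2.symm

lemma cr_pos (hr0 : 0 < r) (hr1 : r < 1) : 0 < cr r := by
  have hint : IntegrableOn (fun u : ℝ => u ^ (r-1) * (1 / (1 + u))) (Ioi (0:ℝ)) :=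
    integrableOn_kernel hr0 hr1 zero_le_one
  have hsub : Ioi (0:ℝ) ⊆ Function.support (fun u : ℝ => u ^ (r-1) * (1 / (1 + u))) ∩ Ioi 0 := by
    intro u hu
    have hu0 : (0:ℝ) < u := hu
    refine ⟨?_, hu⟩
    have : (0:ℝ) < u ^ (r-1) * (1 / (1 + u)) := by positivity
    exact Function.mem_support.mpr this.ne'
  unfold cr
  rw [setIntegral_pos_iff_support_of_nonneg_ae]
  · refine lt_of_lt_of_le ?_ (measure_mono hsub)
    simp [Real.volume_Ioi]
  · refine (ae_restrict_iff' measurableSet_Ioi).mpr (Filter.Eventually.of_forall ?_)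
    intro u hu
    have : (0:ℝ) < u := hu
    positivity
  · exact hint


lemma scalar_LH {r : ℝ} {ι κ : Type*} [Fintype ι] [Fintype κ] (hr0 : 0 < r) (hr1 : r < 1)
    (w a : ι → ℝ) (v b : κ → ℝ) (hw : ∀ i, 0 ≤ w i) (ha : ∀ i, 0 ≤ a i)
    (hv : ∀ j, 0 ≤ v j) (hb : ∀ j, 0 ≤ b j)
    (hsum : ∑ i, w i = ∑ j, v j)
    (hres : ∀ l : ℝ, 0 < l → ∑ i, w i * (a i + l)⁻¹ ≤ ∑ j, v j * (b j + l)⁻¹) :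
    ∑ j, v j * b j ^ r ≤ ∑ i, w i * a i ^ r := by
  -- pointwise inequality of the kernels
  have key : ∀ l : ℝ, 0 < l →
      ∑ j, v j * (b j / (b j + l)) ≤ ∑ i, w i * (a i / (a i + l)) := by
    intro l hl
    have hterm : ∀ c : ℝ, 0 ≤ c → c / (c + l) = 1 - l * (c + l)⁻¹ := by
      intro c hc
      rw [eq_sub_iff_add_eq, div_add' _ _ _ (by positivity : c + l ≠ 0)]
      field_simp
    have e1 : ∑ i, w i * (a i / (a i + l))
        = ∑ i, w i - l * ∑ i, w i * (a i + l)⁻¹ := by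
      rw [Finset.mul_sum, ← Finset.sum_sub_distrib]
      refine Finset.sum_congr rfl fun i _ => ?_
      rw [hterm (a i) (ha i)]; ring
    have e2 : ∑ j, v j * (b j / (b j + l))
        = ∑ j, v j - l * ∑ j, v j * (b j + l)⁻¹ := by
      rw [Finset.mul_sum, ← Finset.sum_sub_distrib]
      refine Finset.sum_congr rfl fun j _ => ?_
      rw [hterm (b j) (hb j)]; ring
    rw [e1, e2, hsum]
    have := hres l hl
    nlinarith
  -- integral representation of each side
  have hintW : ∀ i : ι, IntegrableOn
      (fun l : ℝ => w i * (l ^ (r-1) * (a i / (a i + l)))) (Set.Ioi (0:ℝ)) :=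
    fun i => (integrableOn_kernel hr0 hr1 (ha i)).const_mul (w i)
  have hintV : ∀ j : κ, IntegrableOn
      (fun l : ℝ => v j * (l ^ (r-1) * (b j / (b j + l)))) (Set.Ioi (0:ℝ)) :=
    fun j => (integrableOn_kernel hr0 hr1 (hb j)).const_mul (v j)
  have repW : (∑ i, w i * a i ^ r) * cr r
      = ∫ l in Set.Ioi (0:ℝ), ∑ i, w i * (l ^ (r-1) * (a i / (a i + l))) := by
    rw [integral_finset_sum _ (fun i _ => hintW i), Finset.sum_mul]
    refine Finset.sum_congr rfl fun i _ => ?_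
    rw [integral_const_mul, kernel_integral hr0 hr1 (ha i)]
    ring
  have repV : (∑ j, v j * b j ^ r) * cr r
      = ∫ l in Set.Ioi (0:ℝ), ∑ j, v j * (l ^ (r-1) * (b j / (b j + l))) := by
    rw [integral_finset_sum _ (fun j _ => hintV j), Finset.sum_mul]
    refine Finset.sum_congr rfl fun j _ => ?_
    rw [integral_const_mul, kernel_integral hr0 hr1 (hb j)]
    ring
  have hmono : (∑ j, v j * b j ^ r) * cr r ≤ (∑ i, w i * a i ^ r) * cr r := by
    rw [repW, repV]
    refine setIntegral_mono_on (integrable_finset_sum _ (fun j _ => hintV j))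
      (integrable_finset_sum _ (fun i _ => hintW i)) measurableSet_Ioi ?_
    intro l hl
    have hl0 : (0:ℝ) < l := hl
    have hfact1 : ∑ k, w k * (l ^ (r-1) * (a k / (a k + l)))
          = l ^ (r-1) * ∑ k, w k * (a k / (a k + l)) := by
      rw [Finset.mul_sum]
      exact Finset.sum_congr rfl fun k _ => by ring
    have hfact2 : ∑ k, v k * (l ^ (r-1) * (b k / (b k + l)))
          = l ^ (r-1) * ∑ k, v k * (b k / (b k + l)) := by
      rw [Finset.mul_sum]
      exact Finset.sum_congr rfl fun k _ => by ring
    rw [hfact1, hfact2]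
    exact mul_le_mul_of_nonneg_left (key l hl0) (Real.rpow_nonneg hl0.le _)
  exact le_of_mul_le_mul_right hmono (cr_pos hr0 hr1)


section MatrixPart



variable {n : ℕ} {A : Matrix (Fin n) (Fin n) ℂ} (hA : A.IsHermitian)

lemma U_star_mul : (star (hA.eigenvectorUnitary : Matrix (Fin n) (Fin n) ℂ)) *
    (hA.eigenvectorUnitary : Matrix (Fin n) (Fin n) ℂ) = 1 :=
  mem_unitaryGroup_iff'.mp hA.eigenvectorUnitary.2

lemma U_mul_star : (hA.eigenvectorUnitary : Matrix (Fin n) (Fin n) ℂ) *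
    (star (hA.eigenvectorUnitary : Matrix (Fin n) (Fin n) ℂ)) = 1 :=
  mem_unitaryGroup_iff.mp hA.eigenvectorUnitary.2

lemma cfc_mul (f g : ℝ → ℝ) : hA.cfc f * hA.cfc g = hA.cfc (fun t => f t * g t) := by
  unfold Matrix.IsHermitian.cfc
  simp only [Unitary.conjStarAlgAut_apply]
  have : ∀ (a b c d e f : Matrix (Fin n) (Fin n) ℂ),
      (a * b * c) * (d * e * f) = a * (b * (c * d) * e) * f := by
    intros; simp only [mul_assoc]
  rw [this, U_star_mul hA, mul_one, diagonal_mul_diagonal]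
  congr 2
  ext i
  simp [Matrix.diagonal_apply, Function.comp]

lemma cfc_one : hA.cfc (fun _ => 1) = 1 := by
  unfold Matrix.IsHermitian.cfc
  simp only [Unitary.conjStarAlgAut_apply]
  have : Matrix.diagonal (RCLike.ofReal ∘ (fun _ : ℝ => (1:ℝ)) ∘ hA.eigenvalues)
      = (1 : Matrix (Fin n) (Fin n) ℂ) := by
    ext i j
    simp [Matrix.diagonal_apply, Matrix.one_apply, Function.comp]
  rw [this, mul_one, U_mul_star hA]

lemma cfc_sub (f g : ℝ → ℝ) : hA.cfc f - hA.cfc g = hA.cfc (fun t => f t - g t) := by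
  unfold Matrix.IsHermitian.cfc
  simp only [Unitary.conjStarAlgAut_apply]
  rw [← sub_mul, ← mul_sub]
  congr 2
  ext i j
  by_cases h : i = j <;> simp [Matrix.diagonal_apply, h, Function.comp]

lemma cfc_id : hA.cfc (fun t => t) = A := by
  conv_rhs => rw [hA.spectral_theorem]
  rfl

lemma cfc_congr {f g : ℝ → ℝ} (h : ∀ i, f (hA.eigenvalues i) = g (hA.eigenvalues i)) :
    hA.cfc f = hA.cfc g := by
  unfold Matrix.IsHermitian.cfc
  simp only [Unitary.conjStarAlgAut_apply]
  congr 2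
  ext i j
  by_cases hij : i = j <;> simp [Matrix.diagonal_apply, hij, Function.comp, h]

lemma cfc_isHermitian (f : ℝ → ℝ) : (hA.cfc f).IsHermitian := by
  have hd : (Matrix.diagonal (RCLike.ofReal ∘ f ∘ hA.eigenvalues) : Matrix (Fin n) (Fin n) ℂ)ᴴ
      = Matrix.diagonal (RCLike.ofReal ∘ f ∘ hA.eigenvalues) := by
    ext i j
    by_cases hij : i = j
    · simp [Matrix.conjTranspose_apply, Matrix.diagonal_apply, hij, Function.comp]
    · simp [Matrix.conjTranspose_apply, Matrix.diagonal_apply, hij, Ne.symm hij, Function.comp]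
  unfold Matrix.IsHermitian.cfc
  simp only [Unitary.conjStarAlgAut_apply]
  rw [Matrix.IsHermitian, conjTranspose_mul, conjTranspose_mul, hd,
    ← star_eq_conjTranspose, ← star_eq_conjTranspose, star_star, mul_assoc]

lemma cfc_posSemidef {f : ℝ → ℝ} (h : ∀ i, 0 ≤ f (hA.eigenvalues i)) :
    (hA.cfc f).PosSemidef := by
  unfold Matrix.IsHermitian.cfc
  simp only [Unitary.conjStarAlgAut_apply]
  have hd : (Matrix.diagonal (RCLike.ofReal ∘ f ∘ hA.eigenvalues) : Matrix (Fin n) (Fin n) ℂ).PosSemidef := by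
    rw [posSemidef_diagonal_iff]
    intro i
    simpa using Complex.zero_le_real.mpr (h i)
  have := hd.mul_mul_conjTranspose_same (hA.eigenvectorUnitary : Matrix (Fin n) (Fin n) ℂ)
  rwa [← star_eq_conjTranspose] at this




lemma U_mul_star' : (hA.eigenvectorUnitary : Matrix (Fin n) (Fin n) ℂ) *
    (star (hA.eigenvectorUnitary : Matrix (Fin n) (Fin n) ℂ)) = 1 :=
  mem_unitaryGroup_iff.mp hA.eigenvectorUnitary.2

lemma cfc_add (f g : ℝ → ℝ) : hA.cfc f + hA.cfc g = hA.cfc (fun t => f t + g t) := by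
  unfold Matrix.IsHermitian.cfc
  simp only [Unitary.conjStarAlgAut_apply]
  rw [← add_mul, ← mul_add]
  congr 2
  ext i j
  by_cases h : i = j <;> simp [Matrix.diagonal_apply, h, Function.comp]

lemma cfc_const (c : ℝ) : hA.cfc (fun _ => c) = (c : ℂ) • 1 := by
  unfold Matrix.IsHermitian.cfc
  simp only [Unitary.conjStarAlgAut_apply]
  have : Matrix.diagonal (RCLike.ofReal ∘ (fun _ : ℝ => c) ∘ hA.eigenvalues)
      = (c:ℂ) • (1 : Matrix (Fin n) (Fin n) ℂ) := by
    ext i j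
    by_cases h : i = j <;> simp [Matrix.diagonal_apply, Matrix.one_apply, h, Function.comp]
  rw [this, mul_smul_comm, smul_mul_assoc, mul_one, U_mul_star' hA]

lemma eig_ge_one {C : Matrix (Fin n) (Fin n) ℂ} (hC : C.IsHermitian)
    (h : (C - 1).PosSemidef) (i : Fin n) : 1 ≤ hC.eigenvalues i := by
  set v := ⇑(hC.eigenvectorBasis i) with hv
  have h2 := h.dotProduct_mulVec_nonneg v
  have hvv : star v ⬝ᵥ v = 1 := by
    have hinner : (inner ℂ (hC.eigenvectorBasis i) (hC.eigenvectorBasis i) : ℂ)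
        = star v ⬝ᵥ v := by
      rw [EuclideanSpace.inner_eq_star_dotProduct, dotProduct_comm]
    rw [← hinner, inner_self_eq_norm_sq_to_K, hC.eigenvectorBasis.orthonormal.1 i]
    norm_num
  rw [sub_mulVec, one_mulVec, dotProduct_sub, hC.mulVec_eigenvectorBasis i] at h2
  set mu := hC.eigenvalues i
  have hmu : star v ⬝ᵥ (mu • v) = (mu : ℂ) := by
    rw [RCLike.real_smul_eq_coe_smul (K := ℂ), dotProduct_smul, hvv, smul_eq_mul, mul_one]
    rfl
  rw [hmu, hvv] at h2
  have hcast : ((mu - 1 : ℝ) : ℂ) = (mu:ℂ) - 1 := by push_cast; ring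
  rw [← hcast] at h2
  linarith [Complex.zero_le_real.mp h2]


lemma cfc_addfn {A : Matrix (Fin n) (Fin n) ℂ} (hA : A.IsHermitian) (l : ℝ) :
    hA.cfc (fun t => t + l) = A + (l:ℂ) • 1 := by
  rw [← cfc_add hA (fun t => t) (fun _ => l), cfc_id, cfc_const]


lemma one_sub_inv_psd {T V : Matrix (Fin n) (Fin n) ℂ} (hTH : T.IsHermitian)
    (hT1 : (T - 1).PosSemidef) (hTV : T * V = 1) : (1 - V).PosSemidef := by
  have eigT : ∀ i, 1 ≤ hTH.eigenvalues i := eig_ge_one hTH hT1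
  have hWT : hTH.cfc (fun t => t⁻¹) * T = 1 := by
    have h1 : hTH.cfc (fun t => t⁻¹) * hTH.cfc (fun t => t) = 1 := by
      rw [cfc_mul, ← cfc_one hTH]
      exact cfc_congr hTH fun i => inv_mul_cancel₀ (by linarith [eigT i])
    rwa [cfc_id hTH] at h1
  have hWeq : hTH.cfc (fun t => t⁻¹) = V := by
    calc hTH.cfc (fun t => t⁻¹) = hTH.cfc (fun t => t⁻¹) * (T * V) := by rw [hTV, mul_one]
      _ = (hTH.cfc (fun t => t⁻¹) * T) * V := by rw [mul_assoc]
      _ = V := by rw [hWT, one_mul]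
  rw [← hWeq]
  have h2 : (1 : Matrix (Fin n) (Fin n) ℂ) - hTH.cfc (fun t => t⁻¹)
      = hTH.cfc (fun t => 1 - t⁻¹) := by
    rw [← cfc_one hTH, cfc_sub]
  rw [h2]
  refine cfc_posSemidef hTH fun i => ?_
  have h3 := eigT i
  rw [sub_nonneg, inv_le_one_iff₀]
  right; exact h3


lemma abstract_inv_mono {A B P Q MA NB s s' : Matrix (Fin n) (Fin n) ℂ}
    (hAB : (A - B).PosSemidef)
    (hs'H : s'ᴴ = s') (hMAH : MAᴴ = MA) (hMP : MA * P = 1)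
    (hss' : s * s' = 1) (hs's : s' * s = 1) (hss : s * s = NB) (hQs : s' * s' = Q)
    (hMN : MA - NB = A - B) : (Q - P).PosSemidef := by
  have hTH : (s' * MA * s').IsHermitian := by
    rw [Matrix.IsHermitian, conjTranspose_mul, conjTranspose_mul, hs'H, hMAH, mul_assoc]
  have hT1 : (s' * MA * s' - 1).PosSemidef := by
    have h1 : s' * NB * s' = 1 := by
      rw [← hss, ← mul_assoc, mul_assoc (s' * s), hss', mul_one, hs's]
    have key : s' * MA * s' - 1 = s' * (A - B) * s'ᴴ := by
      rw [hs'H]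
      calc s' * MA * s' - 1 = s' * MA * s' - s' * NB * s' := by rw [h1]
        _ = s' * (MA - NB) * s' := by rw [mul_sub, sub_mul]
        _ = s' * (A - B) * s' := by rw [hMN]
    rw [key]
    exact hAB.mul_mul_conjTranspose_same s'
  have hsPsT : (s' * MA * s') * (s * P * s) = 1 := by
    calc s' * MA * s' * (s * P * s) = s' * MA * (s' * s) * P * s := by
          simp only [mul_assoc]
      _ = s' * (MA * P) * s := by rw [hs's]; simp only [mul_assoc, one_mul]
      _ = 1 := by rw [hMP, mul_one, hs's]
  have h1W : (1 - s * P * s).PosSemidef := one_sub_inv_psd hTH hT1 hsPsT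
  have hPs : s' * (s * P * s) * s' = P := by
    calc s' * (s * P * s) * s' = (s' * s) * P * (s * s') := by simp only [mul_assoc]
      _ = P := by rw [hs's, hss', one_mul, mul_one]
  have final : Q - P = s' * (1 - s * P * s) * s'ᴴ := by
    rw [hs'H, mul_sub, sub_mul, mul_one, hPs, hQs]
  rw [final]
  exact h1W.mul_mul_conjTranspose_same s'

theorem resolvent_mono {A B : Matrix (Fin n) (Fin n) ℂ} (hA : A.PosSemidef) (hB : B.PosSemidef)
    (hAB : (A - B).PosSemidef) {l : ℝ} (hl : 0 < l) :
    (hB.isHermitian.cfc (fun t => (t + l)⁻¹)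
      - hA.isHermitian.cfc (fun t => (t + l)⁻¹)).PosSemidef := by
  have hA' := hA.isHermitian
  have hB' := hB.isHermitian
  have ea : ∀ i, 0 ≤ hA'.eigenvalues i := hA.eigenvalues_nonneg
  have eb : ∀ i, 0 ≤ hB'.eigenvalues i := hB.eigenvalues_nonneg
  have sqpos : ∀ i, 0 < Real.sqrt (hB'.eigenvalues i + l) :=
    fun i => Real.sqrt_pos.mpr (by linarith [eb i])
  refine abstract_inv_mono (MA := hA'.cfc (fun t => t + l)) (NB := hB'.cfc (fun t => t + l))
    (s := hB'.cfc (fun t => Real.sqrt (t + l))) (s' := hB'.cfc (fun t => (Real.sqrt (t + l))⁻¹))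
    hAB (cfc_isHermitian hB' _) (cfc_isHermitian hA' _) ?_ ?_ ?_ ?_ ?_ ?_
  · rw [cfc_mul, ← cfc_one hA']
    exact cfc_congr hA' fun i => mul_inv_cancel₀ (by linarith [ea i])
  · rw [cfc_mul, ← cfc_one hB']
    exact cfc_congr hB' fun i => mul_inv_cancel₀ (sqpos i).ne'
  · rw [cfc_mul, ← cfc_one hB']
    exact cfc_congr hB' fun i => inv_mul_cancel₀ (sqpos i).ne'
  · rw [cfc_mul]
    exact cfc_congr hB' fun i => Real.mul_self_sqrt (by linarith [eb i])
  · rw [cfc_mul]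
    refine cfc_congr hB' fun i => ?_
    rw [← mul_inv, Real.mul_self_sqrt (by linarith [eb i])]
  · rw [cfc_addfn hA' l, cfc_addfn hB' l, add_sub_add_right_eq_sub]




lemma cfc_quadratic (f : ℝ → ℝ) (x : Fin n → ℂ) :
    star x ⬝ᵥ (hA.cfc f *ᵥ x) =
      ((∑ i, f (hA.eigenvalues i) *
        Complex.normSq ((star (hA.eigenvectorUnitary : Matrix (Fin n) (Fin n) ℂ) *ᵥ x) i) : ℝ) : ℂ) := by
  set U := (hA.eigenvectorUnitary : Matrix (Fin n) (Fin n) ℂ) with hU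
  set y := star U *ᵥ x with hy
  have hxU : star x ᵥ* U = star y := by
    rw [hy, star_mulVec]
    congr 1
    rw [← star_eq_conjTranspose, star_star]
  unfold Matrix.IsHermitian.cfc
  simp only [Unitary.conjStarAlgAut_apply]
  rw [← mulVec_mulVec, ← mulVec_mulVec, dotProduct_mulVec, hxU, ← hU, ← hy]
  rw [dotProduct_mulVec, ← dotProduct_mulVec]
  simp only [dotProduct, Matrix.mulVec_diagonal, Function.comp_apply, Pi.star_apply]
  push_cast
  refine Finset.sum_congr rfl fun i _ => ?_
  rw [Complex.normSq_eq_conj_mul_self]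
  simp only [RingHom.coe_coe, Complex.star_def]
  push_cast
  exact mul_left_comm ((starRingEnd ℂ) (y i)) ((f (hA.eigenvalues i) : ℂ)) (y i)


end MatrixPart

end LoewnerHeinzAux

open LoewnerHeinzAux

theorem loewner_heinz {n : ℕ} (A B : Matrix (Fin n) (Fin n) ℂ)
    (hA : A.PosSemidef) (hB : B.PosSemidef) (hAB : (A - B).PosSemidef)
    (r : ℝ) (hr : r ∈ Set.Icc (0:ℝ) 1) :
    (hA.isHermitian.cfc (fun t => t ^ r) - hB.isHermitian.cfc (fun t => t ^ r)).PosSemidef := by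
  obtain ⟨hr0, hr1⟩ := hr
  rcases eq_or_lt_of_le hr0 with rfl | hr0'
  · have h0 : (fun t : ℝ => t ^ (0:ℝ)) = fun _ => 1 := funext fun t => Real.rpow_zero t
    rw [h0, LoewnerHeinzAux.cfc_one hA.isHermitian, LoewnerHeinzAux.cfc_one hB.isHermitian, sub_self]
    exact Matrix.PosSemidef.zero
  rcases eq_or_lt_of_le hr1 with rfl | hr1'
  · have h1 : (fun t : ℝ => t ^ (1:ℝ)) = fun t => t := funext fun t => Real.rpow_one t
    rw [h1, LoewnerHeinzAux.cfc_id hA.isHermitian, LoewnerHeinzAux.cfc_id hB.isHermitian]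
    exact hAB
  -- main case 0 < r < 1
  refine Matrix.PosSemidef.of_dotProduct_mulVec_nonneg ((LoewnerHeinzAux.cfc_isHermitian hA.isHermitian _).sub (LoewnerHeinzAux.cfc_isHermitian hB.isHermitian _)) fun x => ?_
  rw [sub_mulVec, dotProduct_sub, LoewnerHeinzAux.cfc_quadratic hA.isHermitian _ x,
    LoewnerHeinzAux.cfc_quadratic hB.isHermitian _ x, ← Complex.ofReal_sub, Complex.zero_le_real, sub_nonneg]
  set hA' := hA.isHermitian
  set hB' := hB.isHermitian
  set w : Fin n → ℝ := fun i =>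
    Complex.normSq ((star (hA'.eigenvectorUnitary : Matrix (Fin n) (Fin n) ℂ) *ᵥ x) i) with hw
  set v : Fin n → ℝ := fun j =>
    Complex.normSq ((star (hB'.eigenvectorUnitary : Matrix (Fin n) (Fin n) ℂ) *ᵥ x) j) with hv
  have flipA : ∀ f : ℝ → ℝ, ∑ i, f (hA'.eigenvalues i) * w i = ∑ i, w i * f (hA'.eigenvalues i) :=
    fun f => Finset.sum_congr rfl fun i _ => mul_comm _ _
  have flipB : ∀ f : ℝ → ℝ, ∑ j, f (hB'.eigenvalues j) * v j = ∑ j, v j * f (hB'.eigenvalues j) :=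
    fun f => Finset.sum_congr rfl fun j _ => mul_comm _ _
  rw [flipA (fun t => t ^ r), flipB (fun t => t ^ r)]
  have hsum : ∑ i, w i = ∑ j, v j := by
    have hqA := LoewnerHeinzAux.cfc_quadratic hA' (fun _ => 1) x
    have hqB := LoewnerHeinzAux.cfc_quadratic hB' (fun _ => 1) x
    rw [LoewnerHeinzAux.cfc_one hA'] at hqA
    rw [LoewnerHeinzAux.cfc_one hB'] at hqB
    have := hqA.symm.trans hqB
    have h2 := Complex.ofReal_injective this
    simpa using h2
  have hres : ∀ l : ℝ, 0 < l →
      ∑ i, w i * (hA'.eigenvalues i + l)⁻¹ ≤ ∑ j, v j * (hB'.eigenvalues j + l)⁻¹ := by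
    intro l hl
    have hmono := resolvent_mono hA hB hAB hl
    have h2 := hmono.dotProduct_mulVec_nonneg x
    rw [sub_mulVec, dotProduct_sub, LoewnerHeinzAux.cfc_quadratic hB' _ x, LoewnerHeinzAux.cfc_quadratic hA' _ x,
      ← Complex.ofReal_sub, Complex.zero_le_real, sub_nonneg] at h2
    rw [flipA (fun t => (t + l)⁻¹), flipB (fun t => (t + l)⁻¹)] at h2
    exact h2
  exact scalar_LH hr0' hr1' w hA'.eigenvalues v hB'.eigenvalues
    (fun i => Complex.normSq_nonneg _) hA.eigenvalues_nonneg
    (fun j => Complex.normSq_nonneg _) hB.eigenvalues_nonneg hsum hres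
end

section
/- Let f : [0,α) → ℝ be a function satisfying the transformer inequality f(X*AX) ≤ X* f(A) X for all Hermitian A with spectrum in [0,α) and all contractions X (over all matrix sizes). Then for all positive definite matrices A ≥ B > 0 with spectra in (0,α), one has A⁻¹ f(A) ≥ B⁻¹ f(B); i.e., t ↦ f(t)/t is operator monotone on (0,α). -/
open Matrix
open scoped ComplexOrder

section Aux

variable {n : Type*} [Fintype n] [DecidableEq n] {A B : Matrix n n ℂ}

private lemma mat_cfc_herm (hA : A.IsHermitian) (f : ℝ → ℝ) : (hA.cfc f).IsHermitian := by
  have hfun : star (RCLike.ofReal ∘ f ∘ hA.eigenvalues : n → ℂ)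
      = (RCLike.ofReal ∘ f ∘ hA.eigenvalues : n → ℂ) := by
    funext i
    simp [Complex.conj_ofReal]
  have hD : star (diagonal (RCLike.ofReal ∘ f ∘ hA.eigenvalues) : Matrix n n ℂ)
      = diagonal (RCLike.ofReal ∘ f ∘ hA.eigenvalues) := by
    rw [star_eq_conjTranspose, diagonal_conjTranspose, hfun]
  show _ = _
  rw [Matrix.IsHermitian.cfc, Unitary.conjStarAlgAut_apply, ← star_eq_conjTranspose]
  simp only [StarMul.star_mul, star_star, hD, mul_assoc]

private lemma mat_cfc_mul (hA : A.IsHermitian) (f g : ℝ → ℝ) :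
    hA.cfc f * hA.cfc g = hA.cfc (fun t => f t * g t) := by
  have key : ∀ (a b c d e f : Matrix n n ℂ),
      (a * b * c) * (d * e * f) = a * (b * (c * d) * e) * f := by
    intros; simp only [mul_assoc]
  simp only [Matrix.IsHermitian.cfc, Unitary.conjStarAlgAut_apply, key, SetLike.coe_mem, Unitary.star_mul_self_of_mem, mul_one,
    diagonal_mul_diagonal]
  congr! with i
  simp

private lemma mat_cfc_congr (hA : A.IsHermitian) {f g : ℝ → ℝ}
    (h : ∀ x ∈ spectrum ℝ A, f x = g x) : hA.cfc f = hA.cfc g := by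
  have : (RCLike.ofReal ∘ f ∘ hA.eigenvalues : n → ℂ) = RCLike.ofReal ∘ g ∘ hA.eigenvalues := by
    funext i
    simp [h _ (hA.eigenvalues_mem_spectrum_real i)]
  rw [Matrix.IsHermitian.cfc, Matrix.IsHermitian.cfc, this]

private lemma mat_cfc_id (hA : A.IsHermitian) : hA.cfc (fun t => t) = A := by
  rw [Matrix.IsHermitian.cfc]
  exact hA.spectral_theorem.symm

private lemma mat_cfc_one (hA : A.IsHermitian) : hA.cfc (fun _ => 1) = 1 := by
  rw [Matrix.IsHermitian.cfc, Unitary.conjStarAlgAut_apply]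
  have : (diagonal (RCLike.ofReal ∘ (fun _ : ℝ => (1:ℝ)) ∘ hA.eigenvalues) : Matrix n n ℂ) = 1 := by
    rw [← diagonal_one]
    congr 1
  rw [this, mul_one]
  simpa using Unitary.mul_star_self_of_mem (SetLike.coe_mem hA.eigenvectorUnitary)

private lemma mat_cfc_eq_of_eq (h : A = B) (hA : A.IsHermitian) (hB : B.IsHermitian) (f : ℝ → ℝ) :
    hA.cfc f = hB.cfc f := by subst h; rfl

end Aux

section Contraction

variable {n : Type*} [Fintype n] [DecidableEq n]

private lemma dot_conj_mul (X : Matrix n n ℂ) (v : n → ℂ) :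
    star v ⬝ᵥ ((Xᴴ * X) *ᵥ v) = star (X *ᵥ v) ⬝ᵥ (X *ᵥ v) := by
  rw [star_mulVec, ← dotProduct_mulVec, mulVec_mulVec]

private lemma dot_self_eq_norm_sq (v : n → ℂ) :
    star v ⬝ᵥ v = ((‖(WithLp.equiv 2 (n → ℂ)).symm v‖ : ℝ) : ℂ)^2 := by
  have := inner_self_eq_norm_sq_to_K (𝕜 := ℂ) ((WithLp.equiv 2 (n → ℂ)).symm v)
  rw [EuclideanSpace.inner_eq_star_dotProduct] at this
  rw [dotProduct_comm]
  simpa using this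

private lemma inner_eq_dot (v w : n → ℂ) :
    (inner ℂ ((WithLp.equiv 2 (n → ℂ)).symm v) ((WithLp.equiv 2 (n → ℂ)).symm w) : ℂ)
      = star v ⬝ᵥ w := by
  rw [EuclideanSpace.inner_eq_star_dotProduct, dotProduct_comm]
  simp

private lemma contraction_swap (X : Matrix n n ℂ) (h : (1 - X * Xᴴ).PosSemidef) :
    (1 - Xᴴ * X).PosSemidef := by
  set e : (n → ℂ) → EuclideanSpace ℂ n := fun v => (WithLp.equiv 2 (n → ℂ)).symm v with he
  have hdot : ∀ u : n → ℂ, star u ⬝ᵥ ((X * Xᴴ) *ᵥ u) = star (Xᴴ *ᵥ u) ⬝ᵥ (Xᴴ *ᵥ u) := by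
    intro u
    have := dot_conj_mul Xᴴ u
    rwa [conjTranspose_conjTranspose] at this
  -- Xᴴ is a contraction in norm
  have hXH : ∀ u : n → ℂ, ‖e (Xᴴ *ᵥ u)‖ ≤ ‖e u‖ := by
    intro u
    have h1 := h.dotProduct_mulVec_nonneg u
    rw [sub_mulVec, one_mulVec, dotProduct_sub, sub_nonneg, hdot, dot_self_eq_norm_sq,
      dot_self_eq_norm_sq] at h1
    rw [← Complex.ofReal_pow, ← Complex.ofReal_pow, Complex.real_le_real] at h1
    exact (pow_le_pow_iff_left₀ (norm_nonneg _) (norm_nonneg _) two_ne_zero).mp h1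
  -- then X is a contraction in norm
  have hX : ∀ v : n → ℂ, ‖e (X *ᵥ v)‖ ≤ ‖e v‖ := by
    intro v
    rcases eq_or_lt_of_le (norm_nonneg (e (X *ᵥ v))) with hz | hz
    · rw [← hz]; positivity
    · have key : (inner ℂ (e v) (e ((Xᴴ * X) *ᵥ v)) : ℂ) = ((‖e (X *ᵥ v)‖ : ℝ) : ℂ)^2 := by
        rw [inner_eq_dot, dot_conj_mul, dot_self_eq_norm_sq]
      have h2 : ‖e (X *ᵥ v)‖^2 ≤ ‖e v‖ * ‖e (X *ᵥ v)‖ := by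
        calc ‖e (X *ᵥ v)‖^2 = ‖(((‖e (X *ᵥ v)‖ : ℝ) : ℂ))^2‖ := by
              rw [← Complex.ofReal_pow, Complex.norm_real, Real.norm_of_nonneg (by positivity)]
          _ = ‖(inner ℂ (e v) (e ((Xᴴ * X) *ᵥ v)) : ℂ)‖ := by rw [key]
          _ ≤ ‖e v‖ * ‖e ((Xᴴ * X) *ᵥ v)‖ := norm_inner_le_norm _ _
          _ ≤ ‖e v‖ * ‖e (X *ᵥ v)‖ := by
              gcongr
              rw [← mulVec_mulVec]
              exact hXH (X *ᵥ v)
      rw [pow_two] at h2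
      exact le_of_mul_le_mul_right h2 hz
  refine PosSemidef.of_dotProduct_mulVec_nonneg ((isHermitian_one).sub (posSemidef_conjTranspose_mul_self X).isHermitian) fun v => ?_
  rw [sub_mulVec, one_mulVec, dotProduct_sub, sub_nonneg, dot_conj_mul, dot_self_eq_norm_sq,
    dot_self_eq_norm_sq, ← Complex.ofReal_pow, ← Complex.ofReal_pow, Complex.real_le_real]
  exact pow_le_pow_left₀ (norm_nonneg _) (hX v) 2

end Contraction

/-- If `f` satisfies the transformer inequality `f(XᴴAX) ≤ Xᴴ f(A) X` for all Hermitian `A`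
with spectrum in `[0, α)` and all contractions `X` (over all matrix sizes), then
`t ↦ f(t)/t` is operator monotone on `(0, α)`. -/
theorem div_operator_monotone_of_transformer (α : ℝ) (hα : 0 < α) (f : ℝ → ℝ)
    (htrans : ∀ (n : ℕ) (A : Matrix (Fin n) (Fin n) ℂ) (hA : A.IsHermitian),
      spectrum ℝ A ⊆ Set.Ico 0 α →
      ∀ (X : Matrix (Fin n) (Fin n) ℂ), (1 - Xᴴ * X).PosSemidef →
      ∀ (hXAX : (Xᴴ * A * X).IsHermitian),
        (Xᴴ * hA.cfc f * X - hXAX.cfc f).PosSemidef) :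
    ∀ (n : ℕ) (A B : Matrix (Fin n) (Fin n) ℂ) (hA : A.PosDef) (hB : B.PosDef),
      spectrum ℝ A ⊆ Set.Ioo 0 α → spectrum ℝ B ⊆ Set.Ioo 0 α →
      (A - B).PosSemidef →
      (hA.isHermitian.cfc (fun t => f t / t) - hB.isHermitian.cfc (fun t => f t / t)).PosSemidef := by
  intro n A B hA hB sA sB hAB
  have spA : ∀ x ∈ spectrum ℝ A, 0 < x := fun x hx => (sA hx).1
  have spB : ∀ x ∈ spectrum ℝ B, 0 < x := fun x hx => (sB hx).1
  set P := hA.isHermitian.cfc (fun t => (Real.sqrt t)⁻¹) with hPdef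
  set Q := hB.isHermitian.cfc Real.sqrt with hQdef
  set R := hB.isHermitian.cfc (fun t => (Real.sqrt t)⁻¹) with hRdef
  have hP : P.IsHermitian := mat_cfc_herm _ _
  have hQ : Q.IsHermitian := mat_cfc_herm _ _
  have hR : R.IsHermitian := mat_cfc_herm _ _
  -- pointwise facts
  have sqrt_mul_self : ∀ x : ℝ, 0 < x → Real.sqrt x * Real.sqrt x = x := fun x hx =>
    Real.mul_self_sqrt hx.le
  have sqrt_ne : ∀ x : ℝ, 0 < x → Real.sqrt x ≠ 0 := fun x hx =>
    (Real.sqrt_pos.mpr hx).ne'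
  -- P * A * P = 1
  have hPAP : P * A * P = 1 := by
    conv_lhs => rw [← mat_cfc_id hA.isHermitian]
    rw [hPdef, mat_cfc_mul, mat_cfc_mul, ← mat_cfc_one hA.isHermitian]
    apply mat_cfc_congr
    intro x hx
    have hx' := spA x hx
    rw [← sqrt_mul_self x hx']
    field_simp
    rw [Real.sqrt_sq (Real.sqrt_nonneg x)]
  -- Q * Q = B
  have hQQ : Q * Q = B := by
    rw [hQdef, mat_cfc_mul]
    conv_rhs => rw [← mat_cfc_id hB.isHermitian]
    apply mat_cfc_congr
    intro x hx
    exact sqrt_mul_self x (spB x hx)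
  -- Q * R = 1, R * Q = 1
  have hQR : Q * R = 1 := by
    rw [hQdef, hRdef, mat_cfc_mul, ← mat_cfc_one hB.isHermitian]
    apply mat_cfc_congr
    intro x hx
    exact mul_inv_cancel₀ (sqrt_ne x (spB x hx))
  have hRQ : R * Q = 1 := by
    rw [hQdef, hRdef, mat_cfc_mul, ← mat_cfc_one hB.isHermitian]
    apply mat_cfc_congr
    intro x hx
    exact inv_mul_cancel₀ (sqrt_ne x (spB x hx))
  -- P * f(A) * P = g(A)
  have hPfP : P * hA.isHermitian.cfc f * P = hA.isHermitian.cfc (fun t => f t / t) := by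
    rw [hPdef, mat_cfc_mul, mat_cfc_mul]
    apply mat_cfc_congr
    intro x hx
    have hx' := spA x hx
    have h2 : (Real.sqrt x)⁻¹ * (Real.sqrt x)⁻¹ = x⁻¹ := by
      rw [← mul_inv, sqrt_mul_self x hx']
    rw [div_eq_mul_inv, ← h2]
    ring
  -- R * f(B) * R = g(B)
  have hRfR : R * hB.isHermitian.cfc f * R = hB.isHermitian.cfc (fun t => f t / t) := by
    rw [hRdef, mat_cfc_mul, mat_cfc_mul]
    apply mat_cfc_congr
    intro x hx
    have hx' := spB x hx
    have h2 : (Real.sqrt x)⁻¹ * (Real.sqrt x)⁻¹ = x⁻¹ := by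
      rw [← mul_inv, sqrt_mul_self x hx']
    rw [div_eq_mul_inv, ← h2]
    ring
  -- the contraction X
  set X := P * Q with hXdef
  have hXH : Xᴴ = Q * P := by
    rw [hXdef, conjTranspose_mul, hP.eq, hQ.eq]
  have hXAX_eq : Xᴴ * A * X = B := by
    rw [hXH, hXdef, show Q * P * A * (P * Q) = Q * (P * A * P) * Q by simp only [mul_assoc],
      hPAP, mul_one, hQQ]
  have hXXH : X * Xᴴ = P * B * P := by
    rw [hXH, hXdef, show P * Q * (Q * P) = P * (Q * Q) * P by simp only [mul_assoc], hQQ]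
  have hcontr : (1 - Xᴴ * X).PosSemidef := by
    apply contraction_swap
    rw [hXXH, ← hPAP, show P * A * P - P * B * P = P * (A - B) * P by noncomm_ring]
    have := hAB.mul_mul_conjTranspose_same P
    rwa [hP.eq] at this
  have hXAX : (Xᴴ * A * X).IsHermitian := hXAX_eq ▸ hB.isHermitian
  have main := htrans n A hA.isHermitian
    (sA.trans (Set.Ioo_subset_Ico_self)) X hcontr hXAX
  rw [mat_cfc_eq_of_eq hXAX_eq hXAX hB.isHermitian f] at main
  have hconj : Xᴴ * hA.isHermitian.cfc f * X
      = Q * hA.isHermitian.cfc (fun t => f t / t) * Q := by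
    rw [hXH, hXdef, ← hPfP]
    simp only [mul_assoc]
  rw [hconj] at main
  have final := main.mul_mul_conjTranspose_same R
  rw [hR.eq] at final
  have hre : R * (Q * hA.isHermitian.cfc (fun t => f t / t) * Q - hB.isHermitian.cfc f) * R
      = hA.isHermitian.cfc (fun t => f t / t) - hB.isHermitian.cfc (fun t => f t / t) := by
    rw [mul_sub, sub_mul, ← hRfR,
      show R * (Q * hA.isHermitian.cfc (fun t => f t / t) * Q) * R
        = (R * Q) * hA.isHermitian.cfc (fun t => f t / t) * (Q * R) by simp only [mul_assoc],
      hRQ, hQR, one_mul, mul_one]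
  rwa [hre] at final
end

section
/- Let f : [0,α) → ℝ satisfy f(PAP) ≤ P f(A) P for every Hermitian matrix A with spectrum in [0,α) and every orthogonal projection P (over all matrix sizes). Then f is operator convex on [0,α) and f(0) ≤ 0. -/
open Matrix Polynomial
open scoped ComplexOrder

namespace OCAux

variable {n m : ℕ}

noncomputable def qd (a b c d : Matrix (Fin n) (Fin n) ℂ) : Matrix (Fin (n+n)) (Fin (n+n)) ℂ :=
  (fromBlocks a b c d).submatrix finSumFinEquiv.symm finSumFinEquiv.symm

lemma qd_mul (a b c d a' b' c' d' : Matrix (Fin n) (Fin n) ℂ) :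
    qd a b c d * qd a' b' c' d' =
      qd (a*a'+b*c') (a*b'+b*d') (c*a'+d*c') (c*b'+d*d') := by
  unfold qd; rw [submatrix_mul_equiv, fromBlocks_multiply]

lemma qd_add (a b c d a' b' c' d' : Matrix (Fin n) (Fin n) ℂ) :
    qd a b c d + qd a' b' c' d' = qd (a+a') (b+b') (c+c') (d+d') := by
  unfold qd; rw [← fromBlocks_add]; rfl

lemma qd_neg (a b c d : Matrix (Fin n) (Fin n) ℂ) :
    -qd a b c d = qd (-a) (-b) (-c) (-d) := by
  unfold qd; rw [← fromBlocks_neg]; rfl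

lemma qd_sub (a b c d a' b' c' d' : Matrix (Fin n) (Fin n) ℂ) :
    qd a b c d - qd a' b' c' d' = qd (a-a') (b-b') (c-c') (d-d') := by
  simp only [sub_eq_add_neg, qd_neg, qd_add]

lemma qd_smul {R : Type*} [SMul R ℂ] (r : R) (a b c d : Matrix (Fin n) (Fin n) ℂ) :
    r • qd a b c d = qd (r • a) (r • b) (r • c) (r • d) := by
  unfold qd; rw [← fromBlocks_smul]; rfl

lemma qd_one : (qd 1 0 0 1 : Matrix (Fin (n+n)) (Fin (n+n)) ℂ) = 1 := by
  unfold qd; rw [fromBlocks_one, submatrix_one_equiv]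

lemma qd_conjTranspose (a b c d : Matrix (Fin n) (Fin n) ℂ) :
    (qd a b c d)ᴴ = qd aᴴ cᴴ bᴴ dᴴ := by
  unfold qd
  rw [conjTranspose_submatrix, fromBlocks_conjTranspose]

lemma qd_algebraMap (r : ℝ) :
    algebraMap ℝ (Matrix (Fin (n+n)) (Fin (n+n)) ℂ) r
      = qd (algebraMap ℝ _ r) 0 0 (algebraMap ℝ _ r) := by
  rw [Algebra.algebraMap_eq_smul_one, Algebra.algebraMap_eq_smul_one, ← qd_one, qd_smul]
  simp

lemma qd_submatrix_inl (a b c d : Matrix (Fin n) (Fin n) ℂ) :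
    (qd a b c d).submatrix (fun i : Fin n => finSumFinEquiv (Sum.inl i))
      (fun i : Fin n => finSumFinEquiv (Sum.inl i)) = a := by
  ext i j
  simp [qd, submatrix_apply, fromBlocks_apply₁₁]

lemma qd_det (a d : Matrix (Fin n) (Fin n) ℂ) :
    (qd a 0 0 d).det = a.det * d.det := by
  unfold qd; rw [det_submatrix_equiv_self, det_fromBlocks_zero₂₁]

-- new material
lemma spectrum_qd_subset (X Y : Matrix (Fin n) (Fin n) ℂ) :
    spectrum ℝ (qd X 0 0 Y) ⊆ spectrum ℝ X ∪ spectrum ℝ Y := by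
  intro r hr
  by_contra hmem
  rw [Set.mem_union] at hmem
  push_neg at hmem
  obtain ⟨h1, h2⟩ := hmem
  rw [spectrum.notMem_iff] at h1 h2
  rw [spectrum.mem_iff] at hr
  apply hr
  have : algebraMap ℝ (Matrix (Fin (n+n)) (Fin (n+n)) ℂ) r - qd X 0 0 Y
      = qd (algebraMap ℝ _ r - X) 0 0 (algebraMap ℝ _ r - Y) := by
    rw [qd_algebraMap, qd_sub]; simp
  rw [this, Matrix.isUnit_iff_isUnit_det, qd_det]
  exact ((Matrix.isUnit_iff_isUnit_det _).mp h1).mul ((Matrix.isUnit_iff_isUnit_det _).mp h2)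

lemma qd_pow (X Y : Matrix (Fin n) (Fin n) ℂ) (k : ℕ) :
    (qd X 0 0 Y) ^ k = qd (X ^ k) 0 0 (Y ^ k) := by
  induction k with
  | zero => simp [pow_zero, qd_one]
  | succ k ih => rw [pow_succ, ih, qd_mul, pow_succ, pow_succ]; simp

lemma aeval_qd (p : ℝ[X]) (X Y : Matrix (Fin n) (Fin n) ℂ) :
    aeval (qd X 0 0 Y) p = qd (aeval X p) 0 0 (aeval Y p) := by
  induction p using Polynomial.induction_on' with
  | add p q hp hq => rw [map_add, map_add, map_add, hp, hq, qd_add]; simp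
  | monomial k r =>
      rw [aeval_monomial, aeval_monomial, aeval_monomial, qd_algebraMap, qd_pow, qd_mul]
      simp

lemma isHermitian_qd {X Y : Matrix (Fin n) (Fin n) ℂ} (hX : X.IsHermitian) (hY : Y.IsHermitian) :
    (qd X 0 0 Y).IsHermitian := by
  have : (qd X 0 0 Y)ᴴ = qd Xᴴ 0ᴴ 0ᴴ Yᴴ := by
    unfold qd; rw [conjTranspose_submatrix, fromBlocks_conjTranspose]
  rw [Matrix.IsHermitian, this, hX.eq, hY.eq]
  simp

lemma exists_interp (s : Set ℝ) (hs : s.Finite) (f : ℝ → ℝ) :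
    ∃ p : ℝ[X], ∀ x ∈ s, p.eval x = f x := by
  refine ⟨Lagrange.interpolate hs.toFinset id f, fun x hx => ?_⟩
  exact Lagrange.eval_interpolate_at_node f (Set.injOn_id _) (hs.mem_toFinset.2 hx)

lemma cfc_qd (f : ℝ → ℝ) {X Y : Matrix (Fin n) (Fin n) ℂ}
    (hX : X.IsHermitian) (hY : Y.IsHermitian) :
    cfc f (qd X 0 0 Y) = qd (cfc f X) 0 0 (cfc f Y) := by
  obtain ⟨p, hp⟩ := exists_interp
    (spectrum ℝ X ∪ spectrum ℝ Y)
    ((Matrix.finite_real_spectrum (A := X)).union (Matrix.finite_real_spectrum (A := Y))) f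
  have hq : (qd X 0 0 Y).IsHermitian := isHermitian_qd hX hY
  calc cfc f (qd X 0 0 Y) = cfc p.eval (qd X 0 0 Y) := by
        refine cfc_congr fun x hx => ?_
        exact (hp x (spectrum_qd_subset X Y hx)).symm
    _ = aeval (qd X 0 0 Y) p := cfc_polynomial p _ hq.isSelfAdjoint
    _ = qd (aeval X p) 0 0 (aeval Y p) := aeval_qd p X Y
    _ = qd (cfc p.eval X) 0 0 (cfc p.eval Y) := by
        rw [cfc_polynomial p X hX.isSelfAdjoint, cfc_polynomial p Y hY.isSelfAdjoint]
    _ = qd (cfc f X) 0 0 (cfc f Y) := by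
        rw [cfc_congr (fun x hx => (hp x (Set.mem_union_left _ hx))),
            cfc_congr (fun x hx => (hp x (Set.mem_union_right _ hx)))]


variable {m : ℕ}

variable {m : ℕ}

lemma conj_pow (U M : Matrix (Fin m) (Fin m) ℂ) (hU : Uᴴ * U = 1) (k : ℕ) :
    (Uᴴ * M * U) ^ k = Uᴴ * M ^ k * U := by
  have hU' : U * Uᴴ = 1 := mul_eq_one_comm.mp hU
  induction k with
  | zero => rw [pow_zero, pow_zero, mul_one, hU]
  | succ k ih =>
      rw [pow_succ, ih, pow_succ]
      calc Uᴴ * M ^ k * U * (Uᴴ * M * U) = Uᴴ * M ^ k * (U * Uᴴ) * M * U := by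
            simp only [mul_assoc]
        _ = Uᴴ * (M ^ k * M) * U := by rw [hU']; simp only [mul_one, mul_assoc]

lemma conj_algebraMap (U : Matrix (Fin m) (Fin m) ℂ) (hU : Uᴴ * U = 1) (r : ℝ) :
    algebraMap ℝ (Matrix (Fin m) (Fin m) ℂ) r = Uᴴ * algebraMap ℝ _ r * U := by
  rw [← Algebra.commutes r Uᴴ, mul_assoc, hU, mul_one]

lemma aeval_conj (U M : Matrix (Fin m) (Fin m) ℂ) (hU : Uᴴ * U = 1) (p : ℝ[X]) :
    aeval (Uᴴ * M * U) p = Uᴴ * aeval M p * U := by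
  induction p using Polynomial.induction_on' with
  | add p q hp hq => rw [map_add, map_add, hp, hq, mul_add, add_mul]
  | monomial k r =>
      rw [aeval_monomial, aeval_monomial, conj_pow U M hU, ← Algebra.smul_def,
        ← Algebra.smul_def, mul_smul_comm, smul_mul_assoc]

lemma isUnit_of_unitary (U : Matrix (Fin m) (Fin m) ℂ) (hU : Uᴴ * U = 1) : IsUnit U :=
  ⟨⟨U, Uᴴ, mul_eq_one_comm.mp hU, hU⟩, rfl⟩

lemma spectrum_conj_subset (U M : Matrix (Fin m) (Fin m) ℂ) (hU : Uᴴ * U = 1) :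
    spectrum ℝ (Uᴴ * M * U) ⊆ spectrum ℝ M := by
  intro r hr
  by_contra hmem
  rw [spectrum.notMem_iff] at hmem
  rw [spectrum.mem_iff] at hr
  apply hr
  have key : algebraMap ℝ (Matrix (Fin m) (Fin m) ℂ) r - Uᴴ * M * U
      = Uᴴ * (algebraMap ℝ _ r - M) * U := by
    rw [mul_sub, sub_mul, ← conj_algebraMap U hU r]
  rw [key]
  have hUu := isUnit_of_unitary U hU
  have hUHu : IsUnit Uᴴ := ⟨⟨Uᴴ, U, hU, mul_eq_one_comm.mp hU⟩, rfl⟩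
  exact (hUHu.mul hmem).mul hUu

lemma isHermitian_conj {U M : Matrix (Fin m) (Fin m) ℂ} (hM : M.IsHermitian) :
    (Uᴴ * M * U).IsHermitian := by
  rw [Matrix.IsHermitian]
  rw [conjTranspose_mul, conjTranspose_mul, conjTranspose_conjTranspose, hM.eq, mul_assoc]

lemma exists_interp' (s : Set ℝ) (hs : s.Finite) (f : ℝ → ℝ) :
    ∃ p : ℝ[X], ∀ x ∈ s, p.eval x = f x := by
  refine ⟨Lagrange.interpolate hs.toFinset id f, fun x hx => ?_⟩
  exact Lagrange.eval_interpolate_at_node f (Set.injOn_id _) (hs.mem_toFinset.2 hx)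

lemma cfc_conj (f : ℝ → ℝ) (U M : Matrix (Fin m) (Fin m) ℂ) (hU : Uᴴ * U = 1)
    (hM : M.IsHermitian) :
    cfc f (Uᴴ * M * U) = Uᴴ * cfc f M * U := by
  obtain ⟨p, hp⟩ := exists_interp' (spectrum ℝ M) (Matrix.finite_real_spectrum (A := M)) f
  calc cfc f (Uᴴ * M * U) = cfc p.eval (Uᴴ * M * U) := by
        exact cfc_congr fun x hx => (hp x (spectrum_conj_subset U M hU hx)).symm
    _ = aeval (Uᴴ * M * U) p :=
        cfc_polynomial p _ (isHermitian_conj (U := U) hM).isSelfAdjoint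
    _ = Uᴴ * aeval M p * U := aeval_conj U M hU p
    _ = Uᴴ * cfc p.eval M * U := by rw [cfc_polynomial p M hM.isSelfAdjoint]
    _ = Uᴴ * cfc f M * U := by rw [cfc_congr (fun x hx => hp x hx)]


variable {n : ℕ}

noncomputable def rotU (u v : ℂ) : Matrix (Fin (n+n)) (Fin (n+n)) ℂ :=
  qd (u•1) ((-v)•1) (v•1) (u•1)

lemma rotU_conjTranspose (u v : ℂ) (hu : star u = u) (hv : star v = v) :
    (rotU u v : Matrix (Fin (n+n)) (Fin (n+n)) ℂ)ᴴ = qd (u•1) (v•1) ((-v)•1) (u•1) := by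
  unfold rotU
  rw [qd_conjTranspose]
  simp [conjTranspose_smul, hu, hv, star_neg]

lemma rotU_unitary (u v : ℂ) (hu : star u = u) (hv : star v = v) (h : u*u + v*v = 1) :
    (rotU u v : Matrix (Fin (n+n)) (Fin (n+n)) ℂ)ᴴ * rotU u v = 1 := by
  rw [rotU_conjTranspose u v hu hv]
  unfold rotU
  rw [qd_mul, ← qd_one]
  have h12 : u * -v + v * u = 0 := by ring
  have h21 : -v * u + u * v = 0 := by ring
  have h22 : -v * -v + u * u = 1 := by rw [← h]; ring
  simp only [smul_mul_smul_comm, mul_one, ← add_smul]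
  rw [h, h12, h21, h22, one_smul, zero_smul]

lemma rot_conj_compress (u v : ℂ) (X Y : Matrix (Fin n) (Fin n) ℂ)
    (hu : star u = u) (hv : star v = v) :
    qd 1 0 0 0 * ((rotU u v)ᴴ * qd X 0 0 Y * rotU u v) * qd 1 0 0 0
      = qd ((u*u)•X + (v*v)•Y) 0 0 0 := by
  rw [rotU_conjTranspose u v hu hv]
  unfold rotU
  rw [qd_mul, qd_mul, qd_mul, qd_mul]
  congr 1 <;>
    simp [Matrix.smul_mul, Matrix.mul_smul, smul_smul, mul_comm]

lemma ofReal_smul_matrix {m : ℕ} (r : ℝ) (A : Matrix (Fin m) (Fin m) ℂ) :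
    ((r : ℂ)) • A = r • A := by
  rw [← Complex.coe_algebraMap, algebraMap_smul]

end OCAux

open OCAux in
/-- If `f(PAP) ≤ P f(A) P` for every Hermitian `A` with spectrum in `[0, α)` and every
orthogonal projection `P` (all sizes), then `f` is operator convex on `[0, α)` and `f 0 ≤ 0`. -/
theorem operator_convex_of_projection_inequality (α : ℝ) (hα : 0 < α) (f : ℝ → ℝ)
    (hproj : ∀ (n : ℕ) (A : Matrix (Fin n) (Fin n) ℂ) (hA : A.IsHermitian),
      spectrum ℝ A ⊆ Set.Ico 0 α →
      ∀ (P : Matrix (Fin n) (Fin n) ℂ), Pᴴ = P → P * P = P →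
      ∀ (hPAP : (P * A * P).IsHermitian),
        (P * hA.cfc f * P - hPAP.cfc f).PosSemidef) :
    f 0 ≤ 0 ∧
    ∀ (n : ℕ) (A B : Matrix (Fin n) (Fin n) ℂ) (hA : A.IsHermitian) (hB : B.IsHermitian),
      spectrum ℝ A ⊆ Set.Ico 0 α → spectrum ℝ B ⊆ Set.Ico 0 α →
      ∀ l : ℝ, l ∈ Set.Icc (0:ℝ) 1 →
      ∀ (hC : (l • A + (1 - l) • B).IsHermitian),
        (l • hA.cfc f + (1 - l) • hB.cfc f - hC.cfc f).PosSemidef := by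
  constructor
  · -- f 0 ≤ 0
    have hspec : spectrum ℝ (0 : Matrix (Fin 1) (Fin 1) ℂ) ⊆ Set.Ico 0 α := by
      rw [spectrum.zero_eq]
      exact Set.singleton_subset_iff.2 ⟨le_refl _, hα⟩
    have hpap : ((0 : Matrix (Fin 1) (Fin 1) ℂ) * 0 * 0).IsHermitian := by
      simpa using (Matrix.isHermitian_zero (n := Fin 1) (α := ℂ))
    have key := hproj 1 0 Matrix.isHermitian_zero hspec 0 (by simp) (by simp) hpap
    rw [← Matrix.IsHermitian.cfc_eq, ← hpap.cfc_eq f] at key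
    have h00 : ((0 : Matrix (Fin 1) (Fin 1) ℂ) * 0 * 0) = 0 := by simp
    rw [h00, cfc_apply_zero] at key
    have h2 := key.dotProduct_mulVec_nonneg (fun _ => 1)
    simp [dotProduct, Matrix.mulVec, Matrix.sub_apply, Matrix.zero_apply,
      Matrix.algebraMap_matrix_apply, Fin.sum_univ_one, Complex.zero_le_real] at h2
    exact_mod_cast h2
  · intro n A B hA hB hsA hsB l hl hC
    obtain ⟨hl0, hl1⟩ := hl
    set u : ℂ := ((Real.sqrt l : ℝ) : ℂ) with hu_def
    set v : ℂ := ((Real.sqrt (1 - l) : ℝ) : ℂ) with hv_def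
    have hu : star u = u := by simp [hu_def, Complex.star_def, Complex.conj_ofReal]
    have hv : star v = v := by simp [hv_def, Complex.star_def, Complex.conj_ofReal]
    have hu2 : u * u = ((l : ℝ) : ℂ) := by
      rw [hu_def, ← Complex.ofReal_mul, Real.mul_self_sqrt hl0]
    have hv2 : v * v = ((1 - l : ℝ) : ℂ) := by
      rw [hv_def, ← Complex.ofReal_mul, Real.mul_self_sqrt (sub_nonneg.2 hl1)]
    have huv : u * u + v * v = 1 := by
      rw [hu2, hv2, ← Complex.ofReal_add]
      norm_num
    have hU : (rotU u v : Matrix (Fin (n+n)) (Fin (n+n)) ℂ)ᴴ * rotU u v = 1 :=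
      rotU_unitary u v hu hv huv
    have hT : (qd A 0 0 B).IsHermitian := isHermitian_qd hA hB
    have hTs : spectrum ℝ (qd A 0 0 B) ⊆ Set.Ico 0 α :=
      (spectrum_qd_subset A B).trans (Set.union_subset hsA hsB)
    have hA'h : ((rotU u v)ᴴ * qd A 0 0 B * rotU u v).IsHermitian := isHermitian_conj hT
    have hA's : spectrum ℝ ((rotU u v)ᴴ * qd A 0 0 B * rotU u v) ⊆ Set.Ico 0 α :=
      (spectrum_conj_subset _ _ hU).trans hTs
    have hP : (qd 1 0 0 0 : Matrix (Fin (n+n)) (Fin (n+n)) ℂ)ᴴ = qd 1 0 0 0 := by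
      rw [qd_conjTranspose]; simp
    have hPP : (qd 1 0 0 0 : Matrix (Fin (n+n)) (Fin (n+n)) ℂ) * qd 1 0 0 0 = qd 1 0 0 0 := by
      rw [qd_mul]; simp
    have smul_coe : ∀ (r : ℝ) (M : Matrix (Fin n) (Fin n) ℂ), ((r:ℝ):ℂ) • M = r • M :=
      fun r M => ofReal_smul_matrix r M
    have hPAP_eq : qd 1 0 0 0 * ((rotU u v)ᴴ * qd A 0 0 B * rotU u v) * qd 1 0 0 0
        = qd (l • A + (1 - l) • B) 0 0 0 := by
      rw [rot_conj_compress u v A B hu hv, hu2, hv2, smul_coe, smul_coe]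
    have hPAPh : (qd 1 0 0 0 * ((rotU u v)ᴴ * qd A 0 0 B * rotU u v) * qd 1 0 0 0).IsHermitian := by
      rw [hPAP_eq]
      exact isHermitian_qd hC Matrix.isHermitian_zero
    have key := hproj (n+n) _ hA'h hA's (qd 1 0 0 0) hP hPP hPAPh
    rw [← hA'h.cfc_eq f, ← hPAPh.cfc_eq f] at key
    have e1 : cfc f (qd 1 0 0 0 * ((rotU u v)ᴴ * qd A 0 0 B * rotU u v) * qd 1 0 0 0)
        = qd (cfc f (l • A + (1 - l) • B)) 0 0 (cfc f 0) := by
      rw [hPAP_eq, cfc_qd f hC Matrix.isHermitian_zero]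
    have e2 : cfc f ((rotU u v)ᴴ * qd A 0 0 B * rotU u v)
        = (rotU u v)ᴴ * qd (cfc f A) 0 0 (cfc f B) * rotU u v := by
      rw [cfc_conj f (rotU u v) (qd A 0 0 B) hU hT, cfc_qd f hA hB]
    have e3 : qd 1 0 0 0 * ((rotU u v)ᴴ * qd (cfc f A) 0 0 (cfc f B) * rotU u v) * qd 1 0 0 0
        = qd (l • cfc f A + (1 - l) • cfc f B) 0 0 0 := by
      rw [rot_conj_compress u v _ _ hu hv, hu2, hv2, smul_coe, smul_coe]
    rw [e1, e2, e3] at key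
    rw [qd_sub] at key
    have final := key.submatrix (fun i : Fin n => finSumFinEquiv (Sum.inl i))
    rw [qd_submatrix_inl] at final
    rw [← hA.cfc_eq f, ← hB.cfc_eq f, ← hC.cfc_eq f]
    exact final
end

section
/- If g : [0,α) → ℝ is continuous and operator monotone, then h(t) := t·g(t) satisfies h(PAP) ≤ P h(A) P for every positive definite matrix A with spectrum in [0,α) and every orthogonal projection P. -/
open Matrix Polynomial
open scoped ComplexOrder

variable {n : ℕ}

private lemma contOnSpec (f : ℝ → ℝ) (M : Matrix (Fin n) (Fin n) ℂ) :
    ContinuousOn f (spectrum ℝ M) :=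
  Matrix.finite_real_spectrum.continuousOn f

private lemma proj_psd {P : Matrix (Fin n) (Fin n) ℂ} (hP : Pᴴ = P) (hP2 : P * P = P) :
    P.PosSemidef := by
  have h : P = Pᴴ * P := by rw [hP, hP2]
  rw [h]
  exact posSemidef_conjTranspose_mul_self P

open scoped MatrixOrder in
private lemma sqrt_facts (A : Matrix (Fin n) (Fin n) ℂ) (hA : A.PosDef) :
    ∃ S : Matrix (Fin n) (Fin n) ℂ, S.PosSemidef ∧ S * S = A ∧ cfc Real.sqrt A = S :=
  ⟨CFC.sqrt A, (CFC.sqrt_nonneg A).posSemidef, CFC.sqrt_mul_sqrt_self A hA.posSemidef.nonneg,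
    by rw [CFC.sqrt_eq_real_sqrt A hA.posSemidef.nonneg, cfcₙ_eq_cfc]⟩

private lemma posdef_conj {B U : Matrix (Fin n) (Fin n) ℂ} (hB : B.PosDef)
    (hU : U * Uᴴ = 1) : (U * B * Uᴴ).PosDef := by
  refine posDef_iff_dotProduct_mulVec.mpr ⟨?_, fun x hx => ?_⟩
  · have : (U * B * Uᴴ)ᴴ = U * Bᴴ * Uᴴ := by
      simp [conjTranspose_mul, mul_assoc]
    rw [Matrix.IsHermitian, this, hB.1.eq]
  · have hx' : Uᴴ *ᵥ x ≠ 0 := by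
      intro h
      apply hx
      have : U *ᵥ (Uᴴ *ᵥ x) = x := by rw [mulVec_mulVec, hU, one_mulVec]
      rw [h, mulVec_zero] at this
      exact this.symm
    have := hB.dotProduct_mulVec_pos hx'
    simpa only [star_mulVec, dotProduct_mulVec, vecMul_vecMul, conjTranspose_conjTranspose,
      Matrix.mul_assoc] using this

private lemma posDef_smul_one_sub {A : Matrix (Fin n) (Fin n) ℂ} (hA : A.IsHermitian)
    {c : ℝ} (h : ∀ μ ∈ spectrum ℝ A, μ < c) :
    ((c : ℂ) • (1 : Matrix (Fin n) (Fin n) ℂ) - A).PosDef := by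
  have hc : ∀ i, hA.eigenvalues i < c := fun i => h _ (hA.eigenvalues_mem_spectrum_real i)
  set U : Matrix (Fin n) (Fin n) ℂ := (hA.eigenvectorUnitary : Matrix (Fin n) (Fin n) ℂ) with hUdef
  have hU : U * Uᴴ = 1 := by
    simpa [U, ← star_eq_conjTranspose] using unitary.coe_mul_star_self hA.eigenvectorUnitary
  have key : (c : ℂ) • (1 : Matrix (Fin n) (Fin n) ℂ) - A
      = U * diagonal (fun i => ((c - hA.eigenvalues i : ℝ) : ℂ)) * Uᴴ := by
    have hd : (diagonal (fun i => ((c - hA.eigenvalues i : ℝ) : ℂ)) : Matrix (Fin n) (Fin n) ℂ)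
        = (c : ℂ) • (1 : Matrix (Fin n) (Fin n) ℂ)
          - diagonal (RCLike.ofReal ∘ hA.eigenvalues) := by
      ext i j
      by_cases hij : i = j
      · subst hij
        simp [diagonal_apply_eq, Matrix.smul_apply, Matrix.one_apply_eq, Matrix.sub_apply]
      · simp [diagonal_apply_ne _ hij, Matrix.sub_apply, Matrix.smul_apply,
          Matrix.one_apply_ne hij]
    rw [hd, Matrix.mul_sub, Matrix.sub_mul]
    congr 1
    · rw [Matrix.mul_smul, Matrix.smul_mul, Matrix.mul_one, hU]
    · conv_lhs => rw [hA.spectral_theorem]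
      rw [Unitary.conjStarAlgAut_apply, star_eq_conjTranspose]
  rw [key]
  refine posdef_conj (Matrix.PosDef.diagonal fun i => ?_) hU
  rw [Complex.zero_lt_real]
  linarith [hc i]

private lemma eig_lt_of_posDef {B : Matrix (Fin n) (Fin n) ℂ} (hB : B.IsHermitian)
    {c : ℝ} (hpos : ((c : ℂ) • (1 : Matrix (Fin n) (Fin n) ℂ) - B).PosDef) (i : Fin n) :
    hB.eigenvalues i < c := by
  set v : Fin n → ℂ := ⇑(hB.eigenvectorBasis i) with hvdef
  have hv1 : dotProduct (star v) v = 1 := by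
    have hnorm := hB.eigenvectorBasis.orthonormal.1 i
    have : (inner ℂ (hB.eigenvectorBasis i) (hB.eigenvectorBasis i) : ℂ)
        = dotProduct (star v) v :=
          (EuclideanSpace.inner_eq_star_dotProduct _ _).trans (dotProduct_comm _ _)
    rw [← this, inner_self_eq_norm_sq_to_K, hnorm]
    norm_num
  have hv0 : v ≠ 0 := by
    intro h
    rw [h] at hv1
    simp at hv1
  have h2 := hpos.re_dotProduct_pos hv0
  have hBv : B *ᵥ v = (hB.eigenvalues i : ℂ) • v := by
    have := hB.mulVec_eigenvectorBasis i
    rw [hvdef]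
    convert this using 1
    ext j; simp
  have hcalc : dotProduct (star v) (((c : ℂ) • (1 : Matrix (Fin n) (Fin n) ℂ) - B) *ᵥ v)
      = (c : ℂ) - (hB.eigenvalues i : ℂ) := by
    rw [sub_mulVec, smul_mulVec, one_mulVec, dotProduct_sub, dotProduct_smul, hBv,
      dotProduct_smul, hv1]
    simp
  rw [hcalc] at h2
  simp only [RCLike.re_to_complex, Complex.sub_re, Complex.ofReal_re] at h2
  linarith


/-- If `g` is continuous and operator monotone on `[0, α)`, then `h(t) = t * g(t)` satisfies
`h(PAP) ≤ P h(A) P` for positive definite `A` with spectrum in `[0, α)` and projections `P`. -/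
theorem mul_id_of_operator_monotone (α : ℝ) (hα : 0 < α) (g : ℝ → ℝ)
    (hcont : ContinuousOn g (Set.Ico 0 α))
    (hmono : ∀ (n : ℕ) (A B : Matrix (Fin n) (Fin n) ℂ)
      (hA : A.IsHermitian) (hB : B.IsHermitian),
      spectrum ℝ A ⊆ Set.Ico 0 α → spectrum ℝ B ⊆ Set.Ico 0 α →
      (A - B).PosSemidef → (hA.cfc g - hB.cfc g).PosSemidef) :
    ∀ (n : ℕ) (A : Matrix (Fin n) (Fin n) ℂ) (hA : A.PosDef),
      spectrum ℝ A ⊆ Set.Ico 0 α →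
      ∀ (P : Matrix (Fin n) (Fin n) ℂ), Pᴴ = P → P * P = P →
      ∀ (hPAP : (P * A * P).IsHermitian),
        (P * hA.isHermitian.cfc (fun t => t * g t) * P -
          hPAP.cfc (fun t => t * g t)).PosSemidef := by
  intro n A hA hspecA P hP hP2 hPAP
  classical
  obtain ⟨S, hS, hSS, hsqrt0⟩ := sqrt_facts A hA
  have hSH : Sᴴ = S := hS.1
  have hPpsd : P.PosSemidef := proj_psd hP hP2
  set B := S * P * S with hBdef
  have hBH : B.IsHermitian := by
    rw [Matrix.IsHermitian, hBdef, conjTranspose_mul, conjTranspose_mul, hSH, hP, mul_assoc]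
  have hBpsd : B.PosSemidef := by
    have := hPpsd.mul_mul_conjTranspose_same S
    rwa [hSH] at this
  have hABpsd : (A - B).PosSemidef := by
    have h1 : (1 - P).PosSemidef := by
      refine proj_psd ?_ ?_
      · rw [conjTranspose_sub, conjTranspose_one, hP]
      · have h : (1 - P) * (1 - P) = 1 - P - P + P * P := by noncomm_ring
        rw [h, hP2]
        abel
    have h2 := h1.mul_mul_conjTranspose_same S
    rw [hSH] at h2
    have h3 : S * (1 - P) * S = A - B := by
      rw [Matrix.mul_sub, Matrix.mul_one, Matrix.sub_mul, hSS]
    rwa [h3] at h2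
  -- spectrum of B
  have hposA : ((α : ℂ) • (1 : Matrix (Fin n) (Fin n) ℂ) - A).PosDef :=
    posDef_smul_one_sub hA.isHermitian fun μ hμ => (hspecA hμ).2
  have hposB : ((α : ℂ) • (1 : Matrix (Fin n) (Fin n) ℂ) - B).PosDef := by
    have := hposA.add_posSemidef hABpsd
    rwa [sub_add_sub_cancel] at this
  have hspecB : spectrum ℝ B ⊆ Set.Ico 0 α := by
    intro μ hμ
    rw [hBH.spectrum_real_eq_range_eigenvalues] at hμ
    obtain ⟨i, rfl⟩ := hμ
    exact ⟨hBpsd.eigenvalues_nonneg i, eig_lt_of_posDef hBH hposB i⟩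
  -- cfc facts
  have hAsa : IsSelfAdjoint A := hA.isHermitian
  have hBsa : IsSelfAdjoint B := hBH
  have hPAPsa : IsSelfAdjoint (P * A * P) := hPAP
  have hsqrt : cfc Real.sqrt A = S := by
    exact hsqrt0
  have hfa : cfc (fun t => t * g t) A = S * cfc g A * S := by
    have h1 : cfc (fun t => t * g t) A
        = cfc (fun t => (Real.sqrt t * g t) * Real.sqrt t) A := by
      refine cfc_congr fun t ht => ?_
      have ht0 : 0 ≤ t := (hspecA ht).1
      rw [mul_comm (Real.sqrt t) (g t), mul_assoc, Real.mul_self_sqrt ht0, mul_comm]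
    have h2 : cfc (fun t => (Real.sqrt t * g t) * Real.sqrt t) A
        = cfc (fun t => Real.sqrt t * g t) A * cfc Real.sqrt A :=
      cfc_mul _ _ A (contOnSpec _ _) (contOnSpec _ _)
    have h3 : cfc (fun t => Real.sqrt t * g t) A = cfc Real.sqrt A * cfc g A :=
      cfc_mul _ _ A (contOnSpec _ _) (contOnSpec _ _)
    rw [h1, h2, h3, hsqrt]
  have hfPAP : cfc (fun t => t * g t) (P * A * P) = (P * A * P) * cfc g (P * A * P) := by
    have h2 : cfc (fun t => t * g t) (P * A * P)
        = cfc (fun t : ℝ => t) (P * A * P) * cfc g (P * A * P) :=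
      cfc_mul _ _ (P * A * P) (contOnSpec _ _) (contOnSpec _ _)
    rw [h2, cfc_id' ℝ (P * A * P)]
  -- intertwining
  have hkey : B * (S * P) = (S * P) * (P * A * P) := by
    have h1 : B * (S * P) = S * P * (S * S) * P := by simp only [hBdef, mul_assoc]
    have h2 : (S * P) * (P * A * P) = S * (P * P) * A * P := by simp only [mul_assoc]
    rw [h1, h2, hSS, hP2]
  have hcomm : ∀ k : ℕ, B ^ k * (S * P) = (S * P) * (P * A * P) ^ k := by
    intro k
    induction k with
    | zero => simp
    | succ k ih =>
      rw [pow_succ, pow_succ, mul_assoc, hkey, ← mul_assoc, ih, mul_assoc]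
  have hpoly : ∀ q : Polynomial ℝ,
      (Polynomial.aeval B q) * (S * P) = (S * P) * Polynomial.aeval (P * A * P) q := by
    intro q
    induction q using Polynomial.induction_on' with
    | add p q hp hq => rw [map_add, map_add, add_mul, mul_add, hp, hq]
    | monomial k a =>
      rw [Polynomial.aeval_monomial, Polynomial.aeval_monomial, mul_assoc, hcomm k,
        ← mul_assoc, Algebra.commutes a (S * P), mul_assoc]
  -- interpolating polynomial
  have hfin : (spectrum ℝ B ∪ spectrum ℝ (P * A * P)).Finite :=
    Matrix.finite_real_spectrum.union Matrix.finite_real_spectrum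
  set s : Finset ℝ := hfin.toFinset with hsdef
  set q : Polynomial ℝ := Lagrange.interpolate s id g with hqdef
  have hqeval : ∀ x ∈ s, q.eval x = g x := fun x hx => by
    exact Lagrange.eval_interpolate_at_node g (Set.injOn_id _) hx
  have hgB : cfc g B = Polynomial.aeval B q := by
    rw [← cfc_polynomial q B hBsa]
    refine cfc_congr fun x hx => ?_
    exact (hqeval x (hfin.mem_toFinset.mpr (Or.inl hx))).symm
  have hgPAP : cfc g (P * A * P) = Polynomial.aeval (P * A * P) q := by
    rw [← cfc_polynomial q (P * A * P) hPAPsa]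
    refine cfc_congr fun x hx => ?_
    exact (hqeval x (hfin.mem_toFinset.mpr (Or.inr hx))).symm
  have hinter : cfc g B * (S * P) = (S * P) * cfc g (P * A * P) := by
    rw [hgB, hgPAP]; exact hpoly q
  -- final assembly
  have hPAPfact : P * A * P = (P * S) * (S * P) := by
    rw [show (P * S) * (S * P) = P * (S * S) * P by simp only [mul_assoc], hSS]
  have hfPAP2 : cfc (fun t => t * g t) (P * A * P) = (P * S) * cfc g B * (S * P) := by
    have h1 : (P * A * P) * cfc g (P * A * P) = (P * S) * ((S * P) * cfc g (P * A * P)) := by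
      rw [← mul_assoc, ← hPAPfact]
    rw [hfPAP, h1, ← hinter, ← mul_assoc]
  have hmid : (cfc g A - cfc g B).PosSemidef := by
    have := hmono n A B hA.isHermitian hBH hspecA hspecB hABpsd
    rwa [← Matrix.IsHermitian.cfc_eq, ← Matrix.IsHermitian.cfc_eq] at this
  rw [← Matrix.IsHermitian.cfc_eq, ← Matrix.IsHermitian.cfc_eq, hfa, hfPAP2]
  have hexp : P * (S * cfc g A * S) * P - (P * S) * cfc g B * (S * P)
      = (P * S) * (cfc g A - cfc g B) * (S * P) := by
    rw [Matrix.mul_sub, Matrix.sub_mul]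
    congr 1
    simp only [mul_assoc]
  rw [hexp]
  have := hmid.mul_mul_conjTranspose_same (P * S)
  rwa [conjTranspose_mul, hSH, hP] at this
end

section
/- Let f : [0,∞) → ℝ be operator convex with f(0) ≤ 0 and f(t) ≤ 0 for all t ≥ 0. Then -f is operator monotone on [0,∞): if A ≥ B ≥ 0 are positive semidefinite matrices then f(A) ≤ f(B). -/
open Matrix
open scoped ComplexOrder

private lemma aux_psd_smul {n : ℕ} (c : ℝ) (hc : 0 ≤ c) {M : Matrix (Fin n) (Fin n) ℂ}
    (hM : M.PosSemidef) : (c • M).PosSemidef := by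
  refine .of_dotProduct_mulVec_nonneg ?_ (fun x => ?_)
  · rw [Matrix.IsHermitian, conjTranspose_smul, star_trivial, hM.isHermitian.eq]
  · rw [smul_mulVec, dotProduct_smul]
    have h0 := hM.dotProduct_mulVec_nonneg x
    rw [Complex.le_def] at h0 ⊢
    constructor
    · simpa [Complex.smul_re] using mul_nonneg hc h0.1
    · simp [Complex.smul_im, ← h0.2]

private lemma aux_spec_nonneg {n : ℕ} {M : Matrix (Fin n) (Fin n) ℂ} (hM : M.PosSemidef) :
    spectrum ℝ M ⊆ Set.Ici 0 := by
  rw [hM.isHermitian.spectrum_real_eq_range_eigenvalues]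
  rintro x ⟨i, rfl⟩
  exact hM.eigenvalues_nonneg i

private lemma aux_cfc_isHermitian {n : ℕ} {M : Matrix (Fin n) (Fin n) ℂ} (hM : M.IsHermitian)
    (f : ℝ → ℝ) : (hM.cfc f).IsHermitian := by
  unfold Matrix.IsHermitian.cfc
  refine Matrix.isHermitian_mul_mul_conjTranspose _ ((isHermitian_diagonal_iff).2 fun i => ?_)
  simp [Function.comp, _root_.IsSelfAdjoint, Complex.conj_ofReal]

private lemma aux_cfc_nonpos {n : ℕ} {M : Matrix (Fin n) (Fin n) ℂ} (hM : M.PosSemidef)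
    (f : ℝ → ℝ) (hf : ∀ t : ℝ, 0 ≤ t → f t ≤ 0) :
    (-(hM.isHermitian.cfc f)).PosSemidef := by
  have : -(hM.isHermitian.cfc f) =
      (hM.isHermitian.eigenvectorUnitary : Matrix (Fin n) (Fin n) ℂ) *
        diagonal (RCLike.ofReal ∘ (fun t => -(f t)) ∘ hM.isHermitian.eigenvalues) *
        (hM.isHermitian.eigenvectorUnitary : Matrix (Fin n) (Fin n) ℂ)ᴴ := by
    unfold Matrix.IsHermitian.cfc
    rw [Unitary.conjStarAlgAut_apply, Matrix.star_eq_conjTranspose]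
    rw [← neg_mul, ← mul_neg]
    congr 2
    ext i j
    by_cases h : i = j <;> simp [h, Matrix.diagonal_apply, Function.comp]
  rw [this]
  refine Matrix.PosSemidef.mul_mul_conjTranspose_same ?_ _
  refine posSemidef_diagonal_iff.2 fun i => ?_
  simp only [Function.comp]
  rw [RCLike.ofReal_nonneg]
  have := hf _ (hM.eigenvalues_nonneg i)
  linarith

/-- If `f : [0,∞) → ℝ` is operator convex with `f 0 ≤ 0` and `f ≤ 0`, then `-f` is
operator monotone on `[0,∞)`. -/
theorem neg_operator_monotone_of_operator_convex (f : ℝ → ℝ)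
    (hconvex : ∀ (n : ℕ) (A B : Matrix (Fin n) (Fin n) ℂ)
      (hA : A.IsHermitian) (hB : B.IsHermitian),
      spectrum ℝ A ⊆ Set.Ici 0 → spectrum ℝ B ⊆ Set.Ici 0 →
      ∀ l : ℝ, l ∈ Set.Icc (0:ℝ) 1 →
      ∀ (hC : (l • A + (1 - l) • B).IsHermitian),
        (l • hA.cfc f + (1 - l) • hB.cfc f - hC.cfc f).PosSemidef)
    (hf0 : f 0 ≤ 0) (hfneg : ∀ t : ℝ, 0 ≤ t → f t ≤ 0) :
    ∀ (n : ℕ) (A B : Matrix (Fin n) (Fin n) ℂ) (hA : A.PosSemidef) (hB : B.PosSemidef),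
      (A - B).PosSemidef →
      (hB.isHermitian.cfc f - hA.isHermitian.cfc f).PosSemidef := by
  intro n A B hA hB hAB
  set P := hB.isHermitian.cfc f with hP
  set Q := hA.isHermitian.cfc f with hQ
  have key : ∀ l ∈ Set.Ico (0:ℝ) 1, (l • P - Q).PosSemidef := by
    rintro l ⟨hl0, hl1⟩
    have h1l : (0:ℝ) < 1 - l := by linarith
    set D : Matrix (Fin n) (Fin n) ℂ := (1 - l)⁻¹ • (A - l • B) with hDdef
    have hDps : D.PosSemidef := by
      refine aux_psd_smul _ (by positivity) ?_
      have hsplit : A - l • B = (A - B) + (1 - l) • B := by module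
      rw [hsplit]
      exact hAB.add (aux_psd_smul _ (by linarith) hB)
    have hE : l • B + (1 - l) • D = A := by
      rw [hDdef, smul_smul, mul_inv_cancel₀ h1l.ne', one_smul]
      module
    have hC : (l • B + (1 - l) • D).IsHermitian := hE ▸ hA.isHermitian
    have h2 := hconvex n B D hB.isHermitian hDps.isHermitian (aux_spec_nonneg hB)
      (aux_spec_nonneg hDps) l ⟨hl0, by linarith⟩ hC
    have hQeq : hC.cfc f = Q := by
      have e1 : _root_.cfc f (l • B + (1 - l) • D) = _root_.cfc f A := by rw [hE]
      rwa [Matrix.IsHermitian.cfc_eq hC, Matrix.IsHermitian.cfc_eq hA.isHermitian] at e1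
    rw [hQeq] at h2
    have hRneg := aux_cfc_nonpos hDps f hfneg
    have h3 := h2.add (aux_psd_smul (1 - l) (by linarith) hRneg)
    have heq : l • hB.isHermitian.cfc f + (1 - l) • hDps.isHermitian.cfc f - Q
        + (1 - l) • -hDps.isHermitian.cfc f = l • P - Q := by
      rw [← hP]; module
    rwa [heq] at h3
  refine .of_dotProduct_mulVec_nonneg ((aux_cfc_isHermitian hB.isHermitian f).sub (aux_cfc_isHermitian hA.isHermitian f))
    (fun x => ?_)
  set w1 : ℂ := star x ⬝ᵥ P *ᵥ x with hw1
  set w2 : ℂ := star x ⬝ᵥ Q *ᵥ x with hw2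
  have hw : ∀ l ∈ Set.Ico (0:ℝ) 1, w2.re ≤ l * w1.re ∧ l * w1.im = w2.im := by
    intro l hl
    have h0 := (key l hl).dotProduct_mulVec_nonneg x
    rw [sub_mulVec, smul_mulVec, dotProduct_sub, dotProduct_smul, ← hw1, ← hw2,
      Complex.le_def] at h0
    constructor
    · have := h0.1
      simp only [Complex.sub_re, Complex.smul_re, Complex.zero_re, smul_eq_mul] at this
      linarith
    · have := h0.2
      simp only [Complex.sub_im, Complex.smul_im, Complex.zero_im, smul_eq_mul] at this
      linarith
  obtain ⟨hw20, hw2im⟩ := hw 0 ⟨le_refl 0, by norm_num⟩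
  obtain ⟨_, hw1im⟩ := hw (1/2) ⟨by norm_num, by norm_num⟩
  have hw2im0 : w2.im = 0 := by linarith
  have hw1im0 : w1.im = 0 := by
    rw [hw2im0] at hw1im; linarith
  have hre : w2.re ≤ w1.re := by
    have ht : Filter.Tendsto (fun l : ℝ => l * w1.re) (nhdsWithin 1 (Set.Iio 1))
        (nhds w1.re) := by
      have : Filter.Tendsto (fun l : ℝ => l * w1.re) (nhds 1) (nhds (1 * w1.re)) :=
        (continuous_id.mul continuous_const).tendsto 1
      rw [one_mul] at this
      exact this.mono_left nhdsWithin_le_nhds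
    refine ge_of_tendsto ht ?_
    have hev : ∀ᶠ l in nhdsWithin (1:ℝ) (Set.Iio 1), (0:ℝ) < l :=
      Filter.Eventually.filter_mono nhdsWithin_le_nhds
        (Filter.Tendsto.eventually_const_lt (by norm_num) Filter.tendsto_id)
    filter_upwards [self_mem_nhdsWithin, hev] with l hl1 hl0
    exact (hw l ⟨hl0.le, hl1⟩).1
  rw [sub_mulVec, dotProduct_sub, ← hw1, ← hw2, Complex.le_def]
  constructor
  · simp only [Complex.sub_re, Complex.zero_re]; linarith
  · simp only [Complex.sub_im, Complex.zero_im, hw1im0, hw2im0]; ring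
end

section
/- If f : (0,∞) → (0,∞) is operator concave, then 1/f is operator convex on (0,∞): for positive definite A, B, g((A+B)/2) ≤ (g(A)+g(B))/2 where g(t) = 1/f(t). -/
open Matrix
open scoped ComplexOrder

set_option linter.unusedSectionVars false
set_option maxHeartbeats 1000000

variable {n : Type*} [Fintype n] [DecidableEq n]

namespace Aux

/-- real smul of psd is psd -/
lemma smul_posSemidef {M : Matrix n n ℂ} (hM : M.PosSemidef) {c : ℝ} (hc : 0 ≤ c) :
    (c • M).PosSemidef := by
  refine PosSemidef.of_dotProduct_mulVec_nonneg ?_ ?_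
  · unfold Matrix.IsHermitian
    rw [conjTranspose_smul, hM.1]
    norm_num
  · intro x
    have := hM.dotProduct_mulVec_nonneg x
    rw [smul_mulVec, dotProduct_smul]
    have : (0:ℂ) ≤ (c : ℂ) * (star x ⬝ᵥ M.mulVec x) := by
      apply mul_nonneg _ (hM.dotProduct_mulVec_nonneg x)
      exact Complex.zero_le_real.mpr hc
    simpa using this

lemma smul_posDef {M : Matrix n n ℂ} (hM : M.PosDef) {c : ℝ} (hc : 0 < c) :
    (c • M).PosDef := by
  refine PosDef.of_dotProduct_mulVec_pos (smul_posSemidef hM.posSemidef hc.le).1 fun x hx => ?_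
  rw [smul_mulVec, dotProduct_smul]
  have : (0:ℂ) < (c : ℂ) * (star x ⬝ᵥ M.mulVec x) := by
    apply mul_pos _ (hM.dotProduct_mulVec_pos hx)
    exact Complex.zero_lt_real.mpr hc
  simpa using this

lemma conj_posDef {M N : Matrix n n ℂ} (hM : M.PosDef) (hN : IsUnit N) :
    (Nᴴ * M * N).PosDef := by
  refine PosDef.of_dotProduct_mulVec_pos ?_ fun x hx => ?_
  · unfold Matrix.IsHermitian
    simp [conjTranspose_mul, Matrix.mul_assoc, hM.1.eq]
  · have hx' : N.mulVec x ≠ 0 := fun h => hx ((mulVec_injective_iff_isUnit.mpr hN).eq_iff.mp (h.trans (mulVec_zero N).symm))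
    have := hM.dotProduct_mulVec_pos hx'
    simpa [star_mulVec, Matrix.mul_assoc, dotProduct_mulVec, vecMul_vecMul] using this


section conj

variable {M : Matrix n n ℂ} (hM : M.IsHermitian)

local notation "U" => (Matrix.IsHermitian.eigenvectorUnitary hM : Matrix n n ℂ)

lemma UstarU : (star U) * U = 1 := Unitary.coe_star_mul_self _

lemma UUstar : U * star U = 1 := Unitary.coe_mul_star_self _

/-- conjugation of a real diagonal by the eigenvector unitary, product rule -/
lemma conj_diag_mul (d e : n → ℝ) :
    (U * diagonal (fun i => (d i : ℂ)) * star U) * (U * diagonal (fun i => (e i : ℂ)) * star U)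
      = U * diagonal (fun i => ((d i * e i : ℝ) : ℂ)) * star U := by
  have h : (U * diagonal (fun i => (d i : ℂ)) * star U) * (U * diagonal (fun i => (e i : ℂ)) * star U)
      = U * (diagonal (fun i => (d i : ℂ)) * ((star U * U) * diagonal (fun i => (e i : ℂ)))) * star U := by
    simp only [Matrix.mul_assoc]
  rw [h, UstarU, Matrix.one_mul, diagonal_mul_diagonal]
  norm_num

lemma conj_diag_add (d e : n → ℝ) :
    (U * diagonal (fun i => (d i : ℂ)) * star U) + (U * diagonal (fun i => (e i : ℂ)) * star U)
      = U * diagonal (fun i => ((d i + e i : ℝ) : ℂ)) * star U := by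
  rw [← Matrix.add_mul, ← Matrix.mul_add, diagonal_add]
  norm_num

lemma conj_diag_sub (d e : n → ℝ) :
    (U * diagonal (fun i => (d i : ℂ)) * star U) - (U * diagonal (fun i => (e i : ℂ)) * star U)
      = U * diagonal (fun i => ((d i - e i : ℝ) : ℂ)) * star U := by
  rw [← Matrix.sub_mul, ← Matrix.mul_sub, diagonal_sub]
  norm_num

lemma conj_diag_smul (c : ℝ) (d : n → ℝ) :
    c • (U * diagonal (fun i => (d i : ℂ)) * star U)
      = U * diagonal (fun i => ((c * d i : ℝ) : ℂ)) * star U := by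
  symm
  rw [show diagonal (fun i => ((c * d i : ℝ) : ℂ)) = c • diagonal (fun i => (d i : ℂ)) by
    ext i j; by_cases h : i = j <;> simp [diagonal, h, Complex.real_smul, Complex.ofReal_mul]]
  rw [Matrix.mul_smul, Matrix.smul_mul]

lemma conj_diag_one : (1 : Matrix n n ℂ) = U * diagonal (fun _ => ((1:ℝ) : ℂ)) * star U := by
  simp only [Complex.ofReal_one, diagonal_one, Matrix.mul_one, UUstar]

/-- conjugated nonneg diagonal is psd -/
lemma conj_diag_posSemidef {d : n → ℝ} (hd : ∀ i, 0 ≤ d i) :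
    (U * diagonal (fun i => (d i : ℂ)) * star U).PosSemidef := by
  have h : (diagonal (fun i => (d i : ℂ))).PosSemidef :=
    PosSemidef.diagonal fun i => Complex.zero_le_real.mpr (hd i)
  have := h.mul_mul_conjTranspose_same U
  simpa [star_eq_conjTranspose] using this

lemma conj_diag_posDef {d : n → ℝ} (hd : ∀ i, 0 < d i) :
    (U * diagonal (fun i => (d i : ℂ)) * star U).PosDef := by
  have h : (diagonal (fun i => (d i : ℂ))).PosDef :=
    Matrix.posDef_diagonal_iff.mpr fun i => Complex.zero_lt_real.mpr (hd i)
  have hU : IsUnit (star U) :=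
    (Matrix.isUnit_iff_isUnit_det _).mpr (Matrix.isUnit_det_of_right_inverse (B := U) (UstarU hM))
  have := conj_posDef h hU
  simpa [star_eq_conjTranspose, star_star] using this

lemma conj_diag_inv {d : n → ℝ} (hd : ∀ i, d i ≠ 0) :
    (U * diagonal (fun i => (d i : ℂ)) * star U)⁻¹
      = U * diagonal (fun i => (((d i)⁻¹ : ℝ) : ℂ)) * star U := by
  apply Matrix.inv_eq_right_inv
  rw [conj_diag_mul]
  have : (fun i => (((d i * (d i)⁻¹ : ℝ)) : ℂ)) = fun _ => ((1:ℝ):ℂ) := by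
    funext i; rw [mul_inv_cancel₀ (hd i)]
  rw [this, ← conj_diag_one]

end conj

section conj2

variable {M : Matrix n n ℂ} (hM : M.IsHermitian)

local notation "U" => (Matrix.IsHermitian.eigenvectorUnitary hM : Matrix n n ℂ)

lemma psd_entries {d : n → ℝ}
    (h : (U * diagonal (fun i => (d i : ℂ)) * star U).PosSemidef) : ∀ i, 0 ≤ d i := by
  have h2 := h.conjTranspose_mul_mul_same (B := U)
  have h3 : Uᴴ * (U * diagonal (fun i => (d i : ℂ)) * star U) * U
      = diagonal (fun i => (d i : ℂ)) := by
    rw [← star_eq_conjTranspose]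
    calc star U * (U * diagonal (fun i => (d i : ℂ)) * star U) * U
        = (star U * U) * diagonal (fun i => (d i : ℂ)) * (star U * U) := by
          simp only [Matrix.mul_assoc]
      _ = diagonal (fun i => (d i : ℂ)) := by rw [UstarU]; simp
  rw [h3] at h2
  intro i
  exact Complex.zero_le_real.mp (posSemidef_diagonal_iff.mp h2 i)

lemma spectral : M = U * diagonal (fun i => ((hM.eigenvalues i : ℝ) : ℂ)) * star U :=
  hM.spectral_theorem

lemma cfc_form (f : ℝ → ℝ) :
    hM.cfc f = U * diagonal (fun i => ((f (hM.eigenvalues i) : ℝ) : ℂ)) * star U := rfl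

lemma cfc_posDef {f : ℝ → ℝ} (h : ∀ i, 0 < f (hM.eigenvalues i)) : (hM.cfc f).PosDef := by
  rw [cfc_form]
  exact conj_diag_posDef hM h

lemma cfc_inv {f : ℝ → ℝ} (h : ∀ i, f (hM.eigenvalues i) ≠ 0) :
    hM.cfc (fun t => (f t)⁻¹) = (hM.cfc f)⁻¹ := by
  rw [cfc_form, cfc_form, conj_diag_inv hM h]

end conj2

/-- M posdef, M ≤ 1 implies 1 ≤ M⁻¹ -/
lemma inv_sub_one_psd {M : Matrix n n ℂ} (hM : M.PosDef)
    (h : ((1 : Matrix n n ℂ) - M).PosSemidef) : (M⁻¹ - 1).PosSemidef := by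
  have hH := hM.isHermitian
  have hpos : ∀ i, 0 < hH.eigenvalues i := hM.eigenvalues_pos
  have hMeq := spectral hH
  have hMinv : M⁻¹ = (hH.eigenvectorUnitary : Matrix n n ℂ)
      * diagonal (fun i => (((hH.eigenvalues i)⁻¹ : ℝ) : ℂ))
      * star (hH.eigenvectorUnitary : Matrix n n ℂ) := by
    conv_lhs => rw [hMeq]
    exact conj_diag_inv hH (fun i => (hpos i).ne')
  have h1 := conj_diag_sub hH (fun _ => (1:ℝ)) hH.eigenvalues
  rw [← conj_diag_one hH, ← hMeq] at h1
  rw [h1] at h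
  have hle : ∀ i, hH.eigenvalues i ≤ 1 := fun i => by
    have := psd_entries hH h i
    linarith
  have h2 := conj_diag_sub hH (fun i => (hH.eigenvalues i)⁻¹) (fun _ => (1:ℝ))
  rw [← conj_diag_one hH, ← hMinv] at h2
  rw [h2]
  refine conj_diag_posSemidef hH fun i => ?_
  have h5 := hpos i
  have h6 := hle i
  rw [sub_nonneg, le_inv_comm₀ one_pos h5]
  simpa using h6

/-- T posdef implies midpoint convexity of inverse at 1, T -/
lemma midpoint_one {T : Matrix n n ℂ} (hT : T.PosDef) :
    ((2:ℝ)⁻¹ • ((1 : Matrix n n ℂ) + T⁻¹) - ((2:ℝ)⁻¹ • ((1 : Matrix n n ℂ) + T))⁻¹).PosSemidef := by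
  have hH := hT.isHermitian
  have hpos : ∀ i, 0 < hH.eigenvalues i := hT.eigenvalues_pos
  have hTeq := spectral hH
  have hTinv : T⁻¹ = (hH.eigenvectorUnitary : Matrix n n ℂ)
      * diagonal (fun i => (((hH.eigenvalues i)⁻¹ : ℝ) : ℂ))
      * star (hH.eigenvectorUnitary : Matrix n n ℂ) := by
    conv_lhs => rw [hTeq]
    exact conj_diag_inv hH (fun i => (hpos i).ne')
  have e1 : (2:ℝ)⁻¹ • ((1 : Matrix n n ℂ) + T⁻¹)
      = (hH.eigenvectorUnitary : Matrix n n ℂ)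
        * diagonal (fun i => ((2⁻¹ * (1 + (hH.eigenvalues i)⁻¹) : ℝ) : ℂ))
        * star (hH.eigenvectorUnitary : Matrix n n ℂ) := by
    have a1 := conj_diag_add hH (fun _ => (1:ℝ)) (fun i => (hH.eigenvalues i)⁻¹)
    rw [← conj_diag_one hH, ← hTinv] at a1
    rw [a1]
    exact conj_diag_smul hH (2:ℝ)⁻¹ (fun i => 1 + (hH.eigenvalues i)⁻¹)
  have e3 : (2:ℝ)⁻¹ • ((1 : Matrix n n ℂ) + T)
      = (hH.eigenvectorUnitary : Matrix n n ℂ)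
        * diagonal (fun i => ((2⁻¹ * (1 + hH.eigenvalues i) : ℝ) : ℂ))
        * star (hH.eigenvectorUnitary : Matrix n n ℂ) := by
    have a1 := conj_diag_add hH (fun _ => (1:ℝ)) hH.eigenvalues
    rw [← conj_diag_one hH, ← hTeq] at a1
    rw [a1]
    exact conj_diag_smul hH (2:ℝ)⁻¹ (fun i => 1 + hH.eigenvalues i)
  have e2 : ((2:ℝ)⁻¹ • ((1 : Matrix n n ℂ) + T))⁻¹
      = (hH.eigenvectorUnitary : Matrix n n ℂ)
        * diagonal (fun i => (((2⁻¹ * (1 + hH.eigenvalues i))⁻¹ : ℝ) : ℂ))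
        * star (hH.eigenvectorUnitary : Matrix n n ℂ) := by
    rw [e3]
    exact conj_diag_inv hH (fun i => by have := hpos i; positivity)
  rw [e1, e2, conj_diag_sub hH]
  refine conj_diag_posSemidef hH fun i => ?_
  have ht := hpos i
  rw [sub_nonneg, inv_le_iff_one_le_mul₀ (by positivity)]
  have h4 : (hH.eigenvalues i)⁻¹ * hH.eigenvalues i = 1 := inv_mul_cancel₀ ht.ne'
  nlinarith [sq_nonneg (hH.eigenvalues i - 1), mul_pos ht (inv_pos.mpr ht)]

open scoped MatrixOrder in
/-- sqrt of a posdef matrix: hermitian, invertible, squares to Y -/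
lemma sqrt_facts {Y : Matrix n n ℂ} (hY : Y.PosDef) :
    ∃ S : Matrix n n ℂ, S.IsHermitian ∧ IsUnit S ∧ IsUnit S.det ∧ S * S = Y ∧ (S⁻¹)ᴴ = S⁻¹ := by
  have hss : CFC.sqrt Y * CFC.sqrt Y = Y := CFC.sqrt_mul_sqrt_self Y hY.posSemidef.nonneg
  have hdet : IsUnit (CFC.sqrt Y).det := by
    have h1 : IsUnit ((CFC.sqrt Y).det * (CFC.sqrt Y).det) := by
      rw [← Matrix.det_mul, hss]
      exact (Matrix.isUnit_iff_isUnit_det _).mp hY.isUnit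
    exact isUnit_of_mul_isUnit_left h1
  exact ⟨CFC.sqrt Y, (Matrix.nonneg_iff_posSemidef.mp (CFC.sqrt_nonneg Y)).isHermitian,
    (Matrix.isUnit_iff_isUnit_det _).mpr hdet, hdet, hss,
    by rw [Matrix.conjTranspose_nonsing_inv, (Matrix.nonneg_iff_posSemidef.mp (CFC.sqrt_nonneg Y)).isHermitian.eq]⟩

/-- antitonicity of matrix inverse -/
lemma inv_antitone {X Y : Matrix n n ℂ} (hX : X.PosDef) (hY : Y.PosDef)
    (h : (Y - X).PosSemidef) : (X⁻¹ - Y⁻¹).PosSemidef := by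
  obtain ⟨S, hSh, hSu, hSd, hSS, hSinvH⟩ := sqrt_facts hY
  have hiSS : S⁻¹ * S = 1 := Matrix.nonsing_inv_mul S hSd
  have hSSi : S * S⁻¹ = 1 := Matrix.mul_nonsing_inv S hSd
  have hSiu : IsUnit S⁻¹ := (Matrix.isUnit_iff_isUnit_det _).mpr (Matrix.isUnit_det_of_right_inverse (B := S) hiSS)
  have hMpd : (S⁻¹ * X * S⁻¹).PosDef := by
    have := conj_posDef hX hSiu
    rwa [hSinvH] at this
  have hkey : S⁻¹ * Y * S⁻¹ = 1 := by
    rw [← hSS]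
    calc S⁻¹ * (S * S) * S⁻¹ = (S⁻¹ * S) * (S * S⁻¹) := by simp only [Matrix.mul_assoc]
      _ = 1 := by rw [hiSS, hSSi, Matrix.one_mul]
  have h1 : ((1 : Matrix n n ℂ) - S⁻¹ * X * S⁻¹).PosSemidef := by
    have h2 := h.conjTranspose_mul_mul_same (B := S⁻¹)
    rwa [hSinvH, Matrix.mul_sub, Matrix.sub_mul, hkey] at h2
  have h3 := inv_sub_one_psd hMpd h1
  have hMinv : (S⁻¹ * X * S⁻¹)⁻¹ = S * X⁻¹ * S := by
    apply Matrix.inv_eq_right_inv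
    calc (S⁻¹ * X * S⁻¹) * (S * X⁻¹ * S)
        = S⁻¹ * (X * ((S⁻¹ * S) * X⁻¹)) * S := by simp only [Matrix.mul_assoc]
      _ = S⁻¹ * (X * X⁻¹) * S := by rw [hiSS, Matrix.one_mul]
      _ = 1 := by
          rw [Matrix.mul_nonsing_inv X ((Matrix.isUnit_iff_isUnit_det _).mp hX.isUnit),
            Matrix.mul_one, hiSS]
  have h4 := h3.conjTranspose_mul_mul_same (B := S⁻¹)
  rw [hSinvH, hMinv, Matrix.mul_sub, Matrix.sub_mul] at h4
  have e1 : S⁻¹ * (S * X⁻¹ * S) * S⁻¹ = X⁻¹ := by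
    calc S⁻¹ * (S * X⁻¹ * S) * S⁻¹ = (S⁻¹ * S) * (X⁻¹ * (S * S⁻¹)) := by
          simp only [Matrix.mul_assoc]
      _ = X⁻¹ := by rw [hiSS, hSSi, Matrix.mul_one, Matrix.one_mul]
  have e2 : S⁻¹ * (1 : Matrix n n ℂ) * S⁻¹ = Y⁻¹ := by
    rw [Matrix.mul_one, ← Matrix.mul_inv_rev, hSS]
  rwa [e1, e2] at h4

/-- midpoint operator convexity of matrix inverse -/
lemma inv_midpoint_convex {X Y : Matrix n n ℂ} (hX : X.PosDef) (hY : Y.PosDef) :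
    ((2:ℝ)⁻¹ • (X⁻¹ + Y⁻¹) - ((2:ℝ)⁻¹ • (X + Y))⁻¹).PosSemidef := by
  obtain ⟨S, hSh, hSu, hSd, hSS, hSinvH⟩ := sqrt_facts hX
  have hiSS : S⁻¹ * S = 1 := Matrix.nonsing_inv_mul S hSd
  have hSSi : S * S⁻¹ = 1 := Matrix.mul_nonsing_inv S hSd
  have hSiu : IsUnit S⁻¹ := (Matrix.isUnit_iff_isUnit_det _).mpr (Matrix.isUnit_det_of_right_inverse (B := S) hiSS)
  have hTpd : (S⁻¹ * Y * S⁻¹).PosDef := by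
    have := conj_posDef hY hSiu
    rwa [hSinvH] at this
  have hmid := midpoint_one hTpd
  have h4 := hmid.conjTranspose_mul_mul_same (B := S⁻¹)
  rw [hSinvH, Matrix.mul_sub, Matrix.sub_mul] at h4
  have hTinv : (S⁻¹ * Y * S⁻¹)⁻¹ = S * Y⁻¹ * S := by
    apply Matrix.inv_eq_right_inv
    calc (S⁻¹ * Y * S⁻¹) * (S * Y⁻¹ * S)
        = S⁻¹ * (Y * ((S⁻¹ * S) * Y⁻¹)) * S := by simp only [Matrix.mul_assoc]
      _ = S⁻¹ * (Y * Y⁻¹) * S := by rw [hiSS, Matrix.one_mul]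
      _ = 1 := by
          rw [Matrix.mul_nonsing_inv Y ((Matrix.isUnit_iff_isUnit_det _).mp hY.isUnit),
            Matrix.mul_one, hiSS]
  have hSTS : S * (S⁻¹ * Y * S⁻¹) * S = Y := by
    calc S * (S⁻¹ * Y * S⁻¹) * S = (S * S⁻¹) * (Y * (S⁻¹ * S)) := by simp only [Matrix.mul_assoc]
      _ = Y := by rw [hSSi, hiSS, Matrix.mul_one, Matrix.one_mul]
  have e1 : S⁻¹ * ((2:ℝ)⁻¹ • ((1 : Matrix n n ℂ) + (S⁻¹ * Y * S⁻¹)⁻¹)) * S⁻¹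
      = (2:ℝ)⁻¹ • (X⁻¹ + Y⁻¹) := by
    rw [Matrix.mul_smul, Matrix.smul_mul]
    congr 1
    rw [Matrix.mul_add, Matrix.add_mul, Matrix.mul_one, ← Matrix.mul_inv_rev, hSS, hTinv]
    congr 1
    calc S⁻¹ * (S * Y⁻¹ * S) * S⁻¹ = (S⁻¹ * S) * (Y⁻¹ * (S * S⁻¹)) := by
          simp only [Matrix.mul_assoc]
      _ = Y⁻¹ := by rw [hiSS, hSSi, Matrix.mul_one, Matrix.one_mul]
  have e2 : S⁻¹ * (((2:ℝ)⁻¹ • ((1 : Matrix n n ℂ) + (S⁻¹ * Y * S⁻¹)))⁻¹) * S⁻¹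
      = ((2:ℝ)⁻¹ • (X + Y))⁻¹ := by
    have hform : S * ((2:ℝ)⁻¹ • ((1 : Matrix n n ℂ) + (S⁻¹ * Y * S⁻¹))) * S
        = (2:ℝ)⁻¹ • (X + Y) := by
      rw [Matrix.mul_smul, Matrix.smul_mul]
      congr 1
      rw [Matrix.mul_add, Matrix.add_mul, Matrix.mul_one, hSS, hSTS]
    rw [← hform, Matrix.mul_inv_rev, Matrix.mul_inv_rev]
    simp only [Matrix.mul_assoc]
  rwa [e1, e2] at h4

end Aux

open Aux in
/-- If `f : (0,∞) → (0,∞)` is operator concave, then `1/f` is operator convex on `(0,∞)`. -/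
theorem inv_operator_convex_of_operator_concave (f : ℝ → ℝ)
    (hfpos : ∀ t : ℝ, 0 < t → 0 < f t)
    (hconcave : ∀ (n : ℕ) (A B : Matrix (Fin n) (Fin n) ℂ) (hA : A.PosDef) (hB : B.PosDef)
      (hC : ((2:ℝ)⁻¹ • (A + B)).IsHermitian),
      (hC.cfc f - (2:ℝ)⁻¹ • (hA.isHermitian.cfc f + hB.isHermitian.cfc f)).PosSemidef) :
    ∀ (n : ℕ) (A B : Matrix (Fin n) (Fin n) ℂ) (hA : A.PosDef) (hB : B.PosDef)
      (hC : ((2:ℝ)⁻¹ • (A + B)).IsHermitian),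
      ((2:ℝ)⁻¹ • (hA.isHermitian.cfc (fun t => (f t)⁻¹) + hB.isHermitian.cfc (fun t => (f t)⁻¹))
        - hC.cfc (fun t => (f t)⁻¹)).PosSemidef := by
  intro n A B hA hB hC
  have hCpd : ((2:ℝ)⁻¹ • (A + B)).PosDef := smul_posDef (hA.add hB) (by norm_num)
  have hPpd : (hA.isHermitian.cfc f).PosDef :=
    cfc_posDef hA.isHermitian (fun i => hfpos _ (hA.eigenvalues_pos i))
  have hQpd : (hB.isHermitian.cfc f).PosDef :=
    cfc_posDef hB.isHermitian (fun i => hfpos _ (hB.eigenvalues_pos i))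
  have hRpd : (hC.cfc f).PosDef :=
    cfc_posDef hC (fun i => hfpos _ (hCpd.eigenvalues_pos i))
  have hMidpd : ((2:ℝ)⁻¹ • (hA.isHermitian.cfc f + hB.isHermitian.cfc f)).PosDef :=
    smul_posDef (hPpd.add hQpd) (by norm_num)
  have hcon := hconcave n A B hA hB hC
  have h_anti := inv_antitone hMidpd hRpd hcon
  have h_conv := inv_midpoint_convex hPpd hQpd
  have hsum := h_conv.add h_anti
  rw [sub_add_sub_cancel] at hsum
  rw [cfc_inv hA.isHermitian (fun i => (hfpos _ (hA.eigenvalues_pos i)).ne'),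
    cfc_inv hB.isHermitian (fun i => (hfpos _ (hB.eigenvalues_pos i)).ne'),
    cfc_inv hC (fun i => (hfpos _ (hCpd.eigenvalues_pos i)).ne')]
  exact hsum
end

section
/- The logarithm is operator monotone on (0,∞): if A ≥ B > 0 are positive definite matrices, then log A ≥ log B. -/
open Matrix Filter
open scoped ComplexOrder Topology

section Helpers
variable {n : ℕ}

lemma inv_sub_inv_posSemidef {A B : Matrix (Fin n) (Fin n) ℂ}
    (hA : A.PosDef) (hB : B.PosDef) (hAB : (A - B).PosSemidef) :
    (B⁻¹ - A⁻¹).PosSemidef := by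
  have hAu : IsUnit A.det := isUnit_iff_ne_zero.mpr (ne_of_gt hA.det_pos)
  have hBu : IsUnit B.det := isUnit_iff_ne_zero.mpr (ne_of_gt hB.det_pos)
  have key : B⁻¹ - A⁻¹ = (B⁻¹ - A⁻¹)ᴴ * B * (B⁻¹ - A⁻¹) + (A⁻¹)ᴴ * (A - B) * A⁻¹ := by
    have h1 : (B⁻¹ - A⁻¹)ᴴ = B⁻¹ - A⁻¹ := by
      rw [conjTranspose_sub, hA.inv.isHermitian.eq, hB.inv.isHermitian.eq]
    have h2 : (A⁻¹)ᴴ = A⁻¹ := hA.inv.isHermitian.eq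
    rw [h1, h2]
    simp only [sub_mul, mul_sub, Matrix.mul_assoc]
    rw [Matrix.mul_nonsing_inv _ hAu, Matrix.mul_nonsing_inv _ hBu]
    simp only [Matrix.mul_one]
    rw [← Matrix.mul_assoc B⁻¹ B, ← Matrix.mul_assoc A⁻¹ B,
      Matrix.nonsing_inv_mul _ hBu]
    simp only [Matrix.one_mul]
    abel
  rw [key]
  exact ((hB.posSemidef.conjTranspose_mul_mul_same _).add
    (hAB.conjTranspose_mul_mul_same _))

lemma scalar_log_mono {ι κ : Type*} [Fintype ι] [Fintype κ]
    (lam : ι → ℝ) (mu : κ → ℝ) (c : ι → ℝ) (d : κ → ℝ)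
    (hlam : ∀ i, 0 < lam i) (hmu : ∀ j, 0 < mu j)
    (hsum : ∑ i, c i = ∑ j, d j)
    (hineq : ∀ t : ℝ, 0 ≤ t → ∑ i, c i / (lam i + t) ≤ ∑ j, d j / (mu j + t)) :
    ∑ j, d j * Real.log (mu j) ≤ ∑ i, c i * Real.log (lam i) := by
  set h : ℝ → ℝ := fun T => ∑ i, c i * Real.log (lam i + T) - ∑ j, d j * Real.log (mu j + T)
    with hh
  have hderiv : ∀ T : ℝ, 0 ≤ T →
      HasDerivAt h (∑ i, c i / (lam i + T) - ∑ j, d j / (mu j + T)) T := by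
    intro T hT
    have h1 : HasDerivAt (fun T => ∑ i, c i * Real.log (lam i + T))
        (∑ i, c i / (lam i + T)) T := by
      apply HasDerivAt.fun_sum
      intro i _
      have : HasDerivAt (fun T : ℝ => Real.log (lam i + T)) (1 / (lam i + T)) T := by
        simpa using (((hasDerivAt_id T).const_add (lam i)).log
          (by have := hlam i; intro hc; linarith [hc] : lam i + T ≠ 0))
      simpa [mul_one_div, div_eq_mul_inv] using this.const_mul (c i)
    have h2 : HasDerivAt (fun T => ∑ j, d j * Real.log (mu j + T))
        (∑ j, d j / (mu j + T)) T := by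
      apply HasDerivAt.fun_sum
      intro j _
      have : HasDerivAt (fun T : ℝ => Real.log (mu j + T)) (1 / (mu j + T)) T := by
        simpa using (((hasDerivAt_id T).const_add (mu j)).log
          (by have := hmu j; intro hc; linarith [hc] : mu j + T ≠ 0))
      simpa [mul_one_div, div_eq_mul_inv] using this.const_mul (d j)
    exact h1.sub h2
  have hanti : AntitoneOn h (Set.Ici 0) := by
    apply antitoneOn_of_deriv_nonpos (convex_Ici 0)
    · exact fun x hx => (hderiv x hx).continuousAt.continuousWithinAt
    · intro x hx
      rw [interior_Ici] at hx
      exact (hderiv x (le_of_lt hx)).differentiableAt.differentiableWithinAt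
    · intro x hx
      rw [interior_Ici] at hx
      rw [(hderiv x (le_of_lt hx)).deriv]
      exact sub_nonpos.mpr (hineq x (le_of_lt hx))
  have htend : Tendsto h atTop (𝓝 0) := by
    have g0 : Tendsto (fun T : ℝ => ∑ i, c i * Real.log (1 + lam i / T)
        - ∑ j, d j * Real.log (1 + mu j / T)) atTop (𝓝 0) := by
      have key : ∀ (a : ℝ), Tendsto (fun T : ℝ => Real.log (1 + a / T)) atTop (𝓝 0) := by
        intro a
        have hd0 : Tendsto (fun T : ℝ => a / T) atTop (𝓝 0) :=
          tendsto_const_nhds.div_atTop tendsto_id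
        have h1 : Tendsto (fun T : ℝ => 1 + a / T) atTop (𝓝 1) := by
          simpa using tendsto_const_nhds.add hd0
        simpa [Real.log_one, Function.comp_def] using ((Real.continuousAt_log one_ne_zero).tendsto).comp h1
      have hs1 : Tendsto (fun T : ℝ => ∑ i, c i * Real.log (1 + lam i / T)) atTop (𝓝 0) := by
        have := tendsto_finset_sum Finset.univ
          (fun i (_ : i ∈ Finset.univ) => ((key (lam i)).const_mul (c i)))
        simpa using this
      have hs2 : Tendsto (fun T : ℝ => ∑ j, d j * Real.log (1 + mu j / T)) atTop (𝓝 0) := by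
        have := tendsto_finset_sum Finset.univ
          (fun j (_ : j ∈ Finset.univ) => ((key (mu j)).const_mul (d j)))
        simpa using this
      simpa using hs1.sub hs2
    apply g0.congr'
    filter_upwards [eventually_gt_atTop 0] with T hT
    have hlog : ∀ (a : ℝ), 0 < a → Real.log (a + T) = Real.log T + Real.log (1 + a / T) := by
      intro a ha
      have : a + T = T * (1 + a / T) := by field_simp; ring
      rw [this, Real.log_mul (ne_of_gt hT) (by positivity)]
    have e1 : ∑ i, c i * Real.log (lam i + T)
        = (∑ i, c i) * Real.log T + ∑ i, c i * Real.log (1 + lam i / T) := by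
      rw [Finset.sum_mul, ← Finset.sum_add_distrib]
      refine Finset.sum_congr rfl fun i _ => ?_
      rw [hlog (lam i) (hlam i)]; ring
    have e2 : ∑ j, d j * Real.log (mu j + T)
        = (∑ j, d j) * Real.log T + ∑ j, d j * Real.log (1 + mu j / T) := by
      rw [Finset.sum_mul, ← Finset.sum_add_distrib]
      refine Finset.sum_congr rfl fun j _ => ?_
      rw [hlog (mu j) (hmu j)]; ring
    have : h T = ∑ i, c i * Real.log (1 + lam i / T)
        - ∑ j, d j * Real.log (1 + mu j / T) := by
      simp only [hh, e1, e2, hsum]; ring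
    exact this.symm
  have h0 : 0 ≤ h 0 := by
    apply le_of_tendsto htend
    filter_upwards [eventually_ge_atTop 0] with T hT
    exact hanti (Set.mem_Ici.mpr le_rfl) (Set.mem_Ici.mpr hT) hT
  simpa [hh, sub_nonneg] using h0

lemma quad_form_conj_diag (U : Matrix (Fin n) (Fin n) ℂ) (f : Fin n → ℝ)
    (x : Fin n → ℂ) :
    star x ⬝ᵥ ((U * diagonal (fun i => (f i : ℂ)) * star U) *ᵥ x)
      = ((∑ i, f i * Complex.normSq ((star U *ᵥ x) i) : ℝ) : ℂ) := by
  set y := star U *ᵥ x with hy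
  have h1 : (U * diagonal (fun i => (f i : ℂ)) * star U) *ᵥ x
      = U *ᵥ (diagonal (fun i => (f i : ℂ)) *ᵥ y) := by
    rw [hy, mulVec_mulVec, mulVec_mulVec]
  rw [h1, Matrix.dotProduct_mulVec]
  have h2 : star x ᵥ* U = star y := by
    rw [hy, star_mulVec, star_eq_conjTranspose, conjTranspose_conjTranspose]
  rw [h2]
  simp only [dotProduct, Pi.star_apply, mulVec_diagonal, Complex.ofReal_sum,
    Complex.ofReal_mul]
  refine Finset.sum_congr rfl fun i _ => ?_
  have : star (y i) * y i = (Complex.normSq (y i) : ℂ) :=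
    (Complex.normSq_eq_conj_mul_self (z := y i)).symm
  calc star (y i) * ((f i : ℂ) * y i) = (f i : ℂ) * (star (y i) * y i) := by ring
    _ = _ := by rw [this]

lemma smul_one_eq_diagonal' (t : ℝ) :
    (t : ℂ) • (1 : Matrix (Fin n) (Fin n) ℂ) = diagonal (fun _ => (t : ℂ)) := by
  ext i j
  by_cases h : i = j <;> simp [h, Matrix.one_apply, Matrix.diagonal_apply]

lemma conj_diag_add_smul {M U : Matrix (Fin n) (Fin n) ℂ} (e : Fin n → ℝ)
    (hM : M = U * diagonal (fun i => (e i : ℂ)) * star U)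
    (hU : U * star U = 1) (t : ℝ) :
    M + (t : ℂ) • 1 = U * diagonal (fun i => ((e i + t : ℝ) : ℂ)) * star U := by
  have h1 : (t : ℂ) • (1 : Matrix (Fin n) (Fin n) ℂ)
      = U * ((t : ℂ) • 1) * star U := by
    rw [Matrix.mul_smul, Matrix.smul_mul, Matrix.mul_one, hU]
  rw [hM, h1, ← Matrix.add_mul, ← Matrix.mul_add]
  congr 1
  rw [smul_one_eq_diagonal', diagonal_add]
  congr 1
  ext i
  push_cast
  ring

lemma conj_diag_inv (U : Matrix (Fin n) (Fin n) ℂ) (d : Fin n → ℂ) (hd : ∀ i, d i ≠ 0)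
    (hU : U * star U = 1) (hU' : star U * U = 1) :
    (U * diagonal d * star U)⁻¹ = U * diagonal (fun i => (d i)⁻¹) * star U := by
  apply Matrix.inv_eq_right_inv
  have key : star U * (U * (diagonal (fun i => (d i)⁻¹) * star U))
      = diagonal (fun i => (d i)⁻¹) * star U := by
    rw [← Matrix.mul_assoc, hU', Matrix.one_mul]
  simp only [Matrix.mul_assoc]
  rw [key, ← Matrix.mul_assoc (diagonal d), diagonal_mul_diagonal]
  have : (fun i => d i * (d i)⁻¹) = fun _ => (1 : ℂ) := by
    ext i; exact mul_inv_cancel₀ (hd i)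
  rw [this, Matrix.diagonal_one, Matrix.one_mul, hU]

lemma posSemidef_smul_one (t : ℝ) (ht : 0 ≤ t) :
    ((t : ℂ) • (1 : Matrix (Fin n) (Fin n) ℂ)).PosSemidef := by
  rw [smul_one_eq_diagonal']
  exact PosSemidef.diagonal fun i => Complex.zero_le_real.mpr ht

lemma herm_conj_diag (U : Matrix (Fin n) (Fin n) ℂ) (f : Fin n → ℝ) :
    (U * diagonal (fun i => (f i : ℂ)) * star U).IsHermitian := by
  rw [star_eq_conjTranspose]
  exact isHermitian_mul_mul_conjTranspose U
    (isHermitian_diagonal_iff.mpr fun i => Complex.conj_ofReal (f i))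

end Helpers

/-- The logarithm is operator monotone on `(0,∞)`. -/
theorem log_operator_monotone {n : ℕ} (A B : Matrix (Fin n) (Fin n) ℂ)
    (hA : A.PosDef) (hB : B.PosDef) (hAB : (A - B).PosSemidef) :
    (hA.isHermitian.cfc Real.log - hB.isHermitian.cfc Real.log).PosSemidef := by
  classical
  set lam := hA.isHermitian.eigenvalues with hlam_def
  set mu := hB.isHermitian.eigenvalues with hmu_def
  set UA : Matrix (Fin n) (Fin n) ℂ := (hA.isHermitian.eigenvectorUnitary : Matrix (Fin n) (Fin n) ℂ) with hUA_def
  set UB : Matrix (Fin n) (Fin n) ℂ := (hB.isHermitian.eigenvectorUnitary : Matrix (Fin n) (Fin n) ℂ) with hUB_def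
  have hUA1 : UA * star UA = 1 :=
    mem_unitaryGroup_iff.mp (hA.isHermitian.eigenvectorUnitary).2
  have hUA2 : star UA * UA = 1 :=
    mem_unitaryGroup_iff'.mp (hA.isHermitian.eigenvectorUnitary).2
  have hUB1 : UB * star UB = 1 :=
    mem_unitaryGroup_iff.mp (hB.isHermitian.eigenvectorUnitary).2
  have hUB2 : star UB * UB = 1 :=
    mem_unitaryGroup_iff'.mp (hB.isHermitian.eigenvectorUnitary).2
  have hAspec : A = UA * diagonal (fun i => ((lam i : ℝ) : ℂ)) * star UA :=
    hA.isHermitian.spectral_theorem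
  have hBspec : B = UB * diagonal (fun i => ((mu i : ℝ) : ℂ)) * star UB :=
    hB.isHermitian.spectral_theorem
  have hlogA : hA.isHermitian.cfc Real.log
      = UA * diagonal (fun i => ((Real.log (lam i) : ℝ) : ℂ)) * star UA := rfl
  have hlogB : hB.isHermitian.cfc Real.log
      = UB * diagonal (fun i => ((Real.log (mu i) : ℝ) : ℂ)) * star UB := rfl
  have hlam_pos : ∀ i, 0 < lam i := fun i => hA.eigenvalues_pos i
  have hmu_pos : ∀ j, 0 < mu j := fun j => hB.eigenvalues_pos j
  refine posSemidef_iff_dotProduct_mulVec.mpr ⟨?_, ?_⟩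
  · rw [hlogA, hlogB]
    exact (herm_conj_diag UA _).sub (herm_conj_diag UB _)
  intro x
  set c : Fin n → ℝ := fun i => Complex.normSq ((star UA *ᵥ x) i) with hc_def
  set d : Fin n → ℝ := fun j => Complex.normSq ((star UB *ᵥ x) j) with hd_def
  -- equal total masses
  have hsum : ∑ i, c i = ∑ j, d j := by
    have h1 : UA * diagonal (fun _ : Fin n => ((1 : ℝ) : ℂ)) * star UA = 1 := by
      simp only [Complex.ofReal_one, Matrix.diagonal_one, Matrix.mul_one]
      exact hUA1
    have h2 : UB * diagonal (fun _ : Fin n => ((1 : ℝ) : ℂ)) * star UB = 1 := by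
      simp only [Complex.ofReal_one, Matrix.diagonal_one, Matrix.mul_one]
      exact hUB1
    have q1 := quad_form_conj_diag UA (fun _ => (1 : ℝ)) x
    have q2 := quad_form_conj_diag UB (fun _ => (1 : ℝ)) x
    rw [h1] at q1
    rw [h2] at q2
    have := q1.symm.trans q2
    have := Complex.ofReal_inj.mp this
    simpa [hc_def, hd_def] using this
  -- the inequality for each t ≥ 0
  have hineq : ∀ t : ℝ, 0 ≤ t →
      ∑ i, c i / (lam i + t) ≤ ∑ j, d j / (mu j + t) := by
    intro t ht
    have hApos : (A + (t : ℂ) • 1).PosDef := hA.add_posSemidef (posSemidef_smul_one t ht)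
    have hBpos : (B + (t : ℂ) • 1).PosDef := hB.add_posSemidef (posSemidef_smul_one t ht)
    have hdiff : ((A + (t : ℂ) • 1) - (B + (t : ℂ) • 1)).PosSemidef := by
      simpa [add_sub_add_right_eq_sub] using hAB
    have hinv := inv_sub_inv_posSemidef hApos hBpos hdiff
    have hAinv : (A + (t : ℂ) • 1)⁻¹
        = UA * diagonal (fun i => (((lam i + t)⁻¹ : ℝ) : ℂ)) * star UA := by
      rw [conj_diag_add_smul lam hAspec hUA1 t,
        conj_diag_inv UA _ (fun i => by
          simp only [ne_eq, Complex.ofReal_eq_zero]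
          have := hlam_pos i; intro hcon; linarith [hcon]) hUA1 hUA2]
      simp only [Complex.ofReal_inv]
    have hBinv : (B + (t : ℂ) • 1)⁻¹
        = UB * diagonal (fun j => (((mu j + t)⁻¹ : ℝ) : ℂ)) * star UB := by
      rw [conj_diag_add_smul mu hBspec hUB1 t,
        conj_diag_inv UB _ (fun j => by
          simp only [ne_eq, Complex.ofReal_eq_zero]
          have := hmu_pos j; intro hcon; linarith [hcon]) hUB1 hUB2]
      simp only [Complex.ofReal_inv]
    have hq := hinv.dotProduct_mulVec_nonneg x
    rw [sub_mulVec, dotProduct_sub, hAinv, hBinv,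
      quad_form_conj_diag UA (fun i => (lam i + t)⁻¹) x,
      quad_form_conj_diag UB (fun j => (mu j + t)⁻¹) x,
      ← Complex.ofReal_sub] at hq
    have hreal := Complex.zero_le_real.mp hq
    have := sub_nonneg.mp hreal
    calc ∑ i, c i / (lam i + t) = ∑ i, (lam i + t)⁻¹ * c i := by
          refine Finset.sum_congr rfl fun i _ => ?_
          rw [div_eq_mul_inv, mul_comm]
      _ ≤ ∑ j, (mu j + t)⁻¹ * d j := this
      _ = ∑ j, d j / (mu j + t) := by
          refine Finset.sum_congr rfl fun j _ => ?_
          rw [div_eq_mul_inv, mul_comm]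
  -- conclude
  have hmain := scalar_log_mono lam mu c d hlam_pos hmu_pos hsum hineq
  rw [sub_mulVec, dotProduct_sub, hlogA, hlogB,
    quad_form_conj_diag UA (fun i => Real.log (lam i)) x,
    quad_form_conj_diag UB (fun j => Real.log (mu j)) x,
    ← Complex.ofReal_sub]
  apply Complex.zero_le_real.mpr
  apply sub_nonneg.mpr
  calc ∑ j, Real.log (mu j) * d j = ∑ j, d j * Real.log (mu j) := by
        exact Finset.sum_congr rfl fun j _ => mul_comm _ _
    _ ≤ ∑ i, c i * Real.log (lam i) := hmain
    _ = ∑ i, Real.log (lam i) * c i := Finset.sum_congr rfl fun i _ => mul_comm _ _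
end

section
/- If f is a C¹ operator monotone function on (-1,1) with f(0) = 0 and f'(0) = 1, then f(x) ≤ x/(1-x) for all x ∈ [0,1) and f(x) ≥ x/(1+x) for all x ∈ (-1,0]. -/
open Matrix Filter
open scoped ComplexOrder Topology

noncomputable abbrev sym2M (p r q : ℝ) : Matrix (Fin 2) (Fin 2) ℂ :=
  !![(p:ℂ), (r:ℂ); (r:ℂ), (q:ℂ)]

lemma sym2M_herm (p r q : ℝ) : (sym2M p r q).IsHermitian := by
  unfold Matrix.IsHermitian
  ext i j
  fin_cases i <;> fin_cases j <;> simp [Matrix.conjTranspose_apply]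

lemma sym2M_sq (p r q : ℝ) :
    sym2M p r q * sym2M p r q
      = ((p + q : ℝ)) • sym2M p r q - ((p*q - r^2 : ℝ)) • (1 : Matrix (Fin 2) (Fin 2) ℂ) := by
  ext i j
  fin_cases i <;> fin_cases j <;>
    (simp [Matrix.mul_apply, Fin.sum_univ_two, Matrix.one_apply]; push_cast; ring)

lemma sym2M_sub (p r q p' r' q' : ℝ) :
    sym2M p r q - sym2M p' r' q' = sym2M (p - p') (r - r') (q - q') := by
  ext i j
  fin_cases i <;> fin_cases j <;> simp

lemma sym2M_posSemidef {p r q : ℝ} (hp : 0 ≤ p) (hq : 0 ≤ q) (h : r^2 ≤ p*q) :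
    (sym2M p r q).PosSemidef := by
  refine Matrix.PosSemidef.of_dotProduct_mulVec_nonneg (sym2M_herm p r q) (fun x => ?_)
  have hform : dotProduct (star x) ((sym2M p r q) *ᵥ x)
      = ((p * Complex.normSq (x 0) + q * Complex.normSq (x 1)
          + 2*r*((x 0).re * (x 1).re + (x 0).im * (x 1).im) : ℝ) : ℂ) := by
    simp [Matrix.mulVec, dotProduct, Fin.sum_univ_two, Complex.normSq_apply]
    apply Complex.ext <;> simp [Complex.add_re, Complex.mul_re, Complex.mul_im] <;> ring
  rw [hform, Complex.zero_le_real]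
  have hns0 : Complex.normSq (x 0) = (x 0).re^2 + (x 0).im^2 := by
    simp [Complex.normSq_apply]; ring
  have hns1 : Complex.normSq (x 1) = (x 1).re^2 + (x 1).im^2 := by
    simp [Complex.normSq_apply]; ring
  rw [hns0, hns1]
  set a := (x 0).re; set b := (x 0).im; set c := (x 1).re; set d := (x 1).im
  set X := p * (a^2+b^2) with hX
  set Y := q * (c^2+d^2) with hY
  have hX0 : 0 ≤ X := by positivity
  have hY0 : 0 ≤ Y := by positivity
  have h1 : (r * (a*c+b*d))^2 ≤ X*Y := by
    have hcs : (a*c+b*d)^2 ≤ (a^2+b^2)*(c^2+d^2) := by nlinarith [sq_nonneg (a*d - b*c)]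
    calc (r * (a*c+b*d))^2 = r^2 * (a*c+b*d)^2 := by ring
    _ ≤ (p*q) * ((a^2+b^2)*(c^2+d^2)) :=
        mul_le_mul h hcs (sq_nonneg _) (by nlinarith [sq_nonneg r])
    _ = X*Y := by ring
  have hgoal : 0 ≤ X + Y + 2 * (r * (a*c+b*d)) := by
    rcases le_or_gt 0 (r * (a*c+b*d)) with hZ0 | hZ0
    · linarith
    · have h2 : (2*(-(r * (a*c+b*d))))^2 ≤ (X+Y)^2 := by nlinarith [sq_nonneg (X-Y)]
      have h3 : 2*(-(r * (a*c+b*d))) ≤ X+Y :=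
        (pow_le_pow_iff_left₀ (by linarith) (by linarith) two_ne_zero).mp h2
      linarith
  calc (0:ℝ) ≤ X + Y + 2 * (r * (a*c+b*d)) := hgoal
  _ = p * (a ^ 2 + b ^ 2) + q * (c ^ 2 + d ^ 2) + 2 * r * (a * c + b * d) := by rw [hX, hY]; ring

lemma sym2M_psd_ineq {p r q : ℝ} (h : (sym2M p r q).PosSemidef) :
    0 ≤ p ∧ 0 ≤ q ∧ r^2 ≤ p*q := by
  have key : ∀ x y : ℝ, 0 ≤ p*x^2 + 2*r*x*y + q*y^2 := by
    intro x y
    have h2 := h.dotProduct_mulVec_nonneg ![(x:ℂ), (y:ℂ)]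
    have hform : star ![(x:ℂ), (y:ℂ)] ⬝ᵥ (sym2M p r q) *ᵥ ![(x:ℂ), (y:ℂ)]
        = ((p*x^2 + 2*r*x*y + q*y^2 : ℝ) : ℂ) := by
      simp [Matrix.mulVec, dotProduct, Fin.sum_univ_two]
      ring
    rw [hform, Complex.zero_le_real] at h2
    exact h2
  have hp : 0 ≤ p := by have := key 1 0; linarith
  have hq : 0 ≤ q := by have := key 0 1; linarith
  refine ⟨hp, hq, ?_⟩
  have hd := discrim_le_zero (a := p) (b := 2*r) (c := q) (fun x => by have := key x 1; nlinarith)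
  rw [discrim] at hd
  nlinarith

lemma spectrum_subset_pair {T : Matrix (Fin 2) (Fin 2) ℂ} {l m : ℝ}
    (h : T * T = ((l + m : ℝ)) • T - ((l * m : ℝ)) • (1 : Matrix (Fin 2) (Fin 2) ℂ)) :
    spectrum ℝ T ⊆ {l, m} := by
  intro r hr
  by_contra hne
  simp only [Set.mem_insert_iff, Set.mem_singleton_iff, not_or] at hne
  obtain ⟨hrl, hrm⟩ := hne
  rw [spectrum.mem_iff] at hr
  apply hr
  have hx : (r - l) * (r - m) ≠ 0 :=
    mul_ne_zero (sub_ne_zero.mpr hrl) (sub_ne_zero.mpr hrm)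
  set c : ℝ := (-((r - l) * (r - m)))⁻¹ with hc
  have key : (r • (1 : Matrix (Fin 2) (Fin 2) ℂ) - T)
        * ((l + m - r) • (1 : Matrix (Fin 2) (Fin 2) ℂ) - T)
      = (-((r - l) * (r - m))) • (1 : Matrix (Fin 2) (Fin 2) ℂ) := by
    have expand : (r • (1 : Matrix (Fin 2) (Fin 2) ℂ) - T)
          * ((l + m - r) • (1 : Matrix (Fin 2) (Fin 2) ℂ) - T)
        = (r * (l + m - r)) • (1 : Matrix (Fin 2) (Fin 2) ℂ)
          - r • T - (l + m - r) • T + T * T := by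
      simp only [sub_mul, mul_sub, smul_mul_assoc, mul_smul_comm, smul_smul, one_mul, mul_one]
      module
    rw [expand, h]
    module
  have h1 : (algebraMap ℝ (Matrix (Fin 2) (Fin 2) ℂ) r - T)
      * (c • ((l + m - r) • (1 : Matrix (Fin 2) (Fin 2) ℂ) - T)) = 1 := by
    rw [Algebra.algebraMap_eq_smul_one, mul_smul_comm, key, smul_smul, hc,
      inv_mul_cancel₀ (by simpa using hx), one_smul]
  exact ⟨⟨_, _, h1, mul_eq_one_comm.mp h1⟩, rfl⟩

lemma sym2M_spectrum {p r q l m : ℝ} (h1 : p + q = l + m) (h2 : p*q - r^2 = l*m) :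
    spectrum ℝ (sym2M p r q) ⊆ {l, m} :=
  spectrum_subset_pair (by rw [sym2M_sq, h1, h2])

lemma cfc_affine {T : Matrix (Fin 2) (Fin 2) ℂ} (hT : T.IsHermitian) {l m : ℝ} (hlm : l < m)
    (hspec : spectrum ℝ T ⊆ {l, m}) (f : ℝ → ℝ) :
    cfc f T = ((f m - f l)/(m - l)) • T
      + algebraMap ℝ (Matrix (Fin 2) (Fin 2) ℂ) ((m * f l - l * f m)/(m - l)) := by
  have hsa : IsSelfAdjoint T := hT
  have hml : m - l ≠ 0 := sub_ne_zero.mpr hlm.ne'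
  have h1 : cfc f T
      = cfc (fun x => ((f m - f l)/(m-l)) * x + ((m * f l - l * f m)/(m-l))) T := by
    apply cfc_congr
    intro x hx
    have hx' := hspec hx
    simp only [Set.mem_insert_iff, Set.mem_singleton_iff] at hx'
    rcases hx' with rfl | rfl <;> field_simp <;> ring
  rw [h1, cfc_add_const _ (fun x => ((f m - f l)/(m-l)) * x) T (by fun_prop) hsa,
    cfc_const_mul_id _ T hsa]

set_option maxHeartbeats 1000000 in
lemma master (f : ℝ → ℝ)
    (hm : ∀ (A B : Matrix (Fin 2) (Fin 2) ℂ) (hA : A.IsHermitian) (hB : B.IsHermitian),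
      spectrum ℝ A ⊆ Set.Ioo (-1:ℝ) 1 → spectrum ℝ B ⊆ Set.Ioo (-1:ℝ) 1 →
      (B - A).PosSemidef → (hB.cfc f - hA.cfc f).PosSemidef)
    {a b e d : ℝ} (ha : -1 < a) (hab : a < b) (hbe : b ≤ e) (hed : e < d) (hd : d < 1) :
    (b - a) * (d - e) * (f e - f a) * (f d - f b)
      ≤ (f b - f a) * (f d - f e) * (d - b) * (e - a) := by
  have hbd : b < d := lt_of_le_of_lt hbe hed
  have hae : a < e := lt_of_lt_of_le hab hbe
  have hdb : (0:ℝ) < d - b := by linarith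
  have hea : (0:ℝ) < e - a := by linarith
  have hden : (0:ℝ) < (d - b) * (e - a) := mul_pos hdb hea
  obtain ⟨t, ht0, ht1, ht_eq⟩ :
      ∃ t : ℝ, 0 ≤ t ∧ t ≤ 1 ∧ t * ((d - b) * (e - a)) = (b - a) * (d - e) := by
    refine ⟨(b - a) * (d - e) / ((d - b) * (e - a)),
      div_nonneg (by nlinarith) hden.le, ?_, by field_simp⟩
    rw [div_le_one hden]; nlinarith
  obtain ⟨σ, hσ2⟩ : ∃ σ : ℝ, σ^2 = t * (1 - t) :=
    ⟨Real.sqrt (t * (1 - t)), Real.sq_sqrt (by nlinarith)⟩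
  have hA := sym2M_herm a 0 e
  have hB := sym2M_herm (b + (d - b) * t) ((b - d) * σ) (d - (d - b) * t)
  have specA : spectrum ℝ (sym2M a 0 e) ⊆ {a, e} :=
    sym2M_spectrum (by ring) (by ring)
  have specB : spectrum ℝ (sym2M (b + (d - b) * t) ((b - d) * σ) (d - (d - b) * t)) ⊆ {b, d} :=
    sym2M_spectrum (by ring) (by linear_combination (-(d-b)^2) * hσ2)
  have specA' : spectrum ℝ (sym2M a 0 e) ⊆ Set.Ioo (-1:ℝ) 1 := by
    refine specA.trans ?_
    intro x hx
    rcases hx with rfl | hx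
    · exact ⟨ha, by linarith⟩
    · rw [Set.mem_singleton_iff] at hx; subst hx
      exact ⟨by linarith, by linarith⟩
  have specB' : spectrum ℝ (sym2M (b + (d - b) * t) ((b - d) * σ) (d - (d - b) * t))
      ⊆ Set.Ioo (-1:ℝ) 1 := by
    refine specB.trans ?_
    intro x hx
    rcases hx with rfl | hx
    · exact ⟨by linarith, by linarith⟩
    · rw [Set.mem_singleton_iff] at hx; subst hx
      exact ⟨by linarith, hd⟩
  have hBA : (sym2M (b + (d - b) * t) ((b - d) * σ) (d - (d - b) * t)
      - sym2M a 0 e).PosSemidef := by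
    rw [sym2M_sub]
    apply sym2M_posSemidef
    · linarith [mul_nonneg (le_of_lt hdb) ht0]
    · nlinarith
    · have hEq : ((b - d) * σ - 0)^2 = (b + (d - b) * t - a) * (d - (d - b) * t - e) := by
        linear_combination ((d-b)^2) * hσ2 + ht_eq
      rw [hEq]
  have hPSD := hm _ _ hA hB specA' specB' hBA
  rw [← hA.cfc_eq f, ← hB.cfc_eq f] at hPSD
  rw [cfc_affine hA hae specA f, cfc_affine hB hbd specB f] at hPSD
  have hmat : ((f d - f b) / (d - b)) • sym2M (b + (d - b) * t) ((b - d) * σ) (d - (d - b) * t)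
      + algebraMap ℝ (Matrix (Fin 2) (Fin 2) ℂ) ((d * f b - b * f d) / (d - b))
      - (((f e - f a) / (e - a)) • sym2M a 0 e
        + algebraMap ℝ (Matrix (Fin 2) (Fin 2) ℂ) ((e * f a - a * f e) / (e - a)))
      = sym2M
          ((f d - f b) / (d - b) * (b + (d - b) * t) + (d * f b - b * f d) / (d - b)
            - ((f e - f a) / (e - a) * a + (e * f a - a * f e) / (e - a)))
          ((f d - f b) / (d - b) * ((b - d) * σ))
          ((f d - f b) / (d - b) * (d - (d - b) * t) + (d * f b - b * f d) / (d - b)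
            - ((f e - f a) / (e - a) * e + (e * f a - a * f e) / (e - a))) := by
    ext i j
    fin_cases i <;> fin_cases j <;>
      simp [Matrix.algebraMap_matrix_apply, Complex.real_smul] <;> push_cast <;> ring
  rw [hmat] at hPSD
  obtain ⟨hP, hQ, hPQ⟩ := sym2M_psd_ineq hPSD
  clear hPSD hmat hBA specA specB specA' specB' hA hB hm hP hQ
  have hPv : (f d - f b) / (d - b) * (b + (d - b) * t) + (d * f b - b * f d) / (d - b)
      - ((f e - f a) / (e - a) * a + (e * f a - a * f e) / (e - a))
      = (f b - f a) + (f d - f b) * t := by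
    field_simp
    ring
  have hQv : (f d - f b) / (d - b) * (d - (d - b) * t) + (d * f b - b * f d) / (d - b)
      - ((f e - f a) / (e - a) * e + (e * f a - a * f e) / (e - a))
      = (f d - f e) - (f d - f b) * t := by
    field_simp
    ring
  have hRv : ((f d - f b) / (d - b) * ((b - d) * σ))^2 = (f d - f b)^2 * (t * (1 - t)) := by
    have h1 : (f d - f b) / (d - b) * ((b - d) * σ) = -((f d - f b) * σ) := by
      field_simp
      ring
    rw [h1]
    linear_combination ((f d - f b)^2) * hσ2
  rw [hPv, hQv, hRv] at hPQ
  have hK : 0 ≤ ((f b - f a) * (f d - f e) - (f e - f a) * (f d - f b) * t) * ((d-b)*(e-a)) :=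
    mul_nonneg (by nlinarith [hPQ]) hden.le
  have h5 := congrArg (· * ((f e - f a) * (f d - f b))) ht_eq
  nlinarith [hK, h5]

lemma mono_of (f : ℝ → ℝ)
    (hm : ∀ (A B : Matrix (Fin 1) (Fin 1) ℂ) (hA : A.IsHermitian) (hB : B.IsHermitian),
      spectrum ℝ A ⊆ Set.Ioo (-1:ℝ) 1 → spectrum ℝ B ⊆ Set.Ioo (-1:ℝ) 1 →
      (B - A).PosSemidef → (hB.cfc f - hA.cfc f).PosSemidef)
    {x y : ℝ} (hx : x ∈ Set.Ioo (-1:ℝ) 1) (hy : y ∈ Set.Ioo (-1:ℝ) 1) (hxy : x ≤ y) :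
    f x ≤ f y := by
  set A := algebraMap ℝ (Matrix (Fin 1) (Fin 1) ℂ) x with hAdef
  set B := algebraMap ℝ (Matrix (Fin 1) (Fin 1) ℂ) y with hBdef
  have hA : A.IsHermitian := by
    have : IsSelfAdjoint A := IsSelfAdjoint.algebraMap _ (isSelfAdjoint_iff.mpr rfl)
    exact this
  have hB : B.IsHermitian := by
    have : IsSelfAdjoint B := IsSelfAdjoint.algebraMap _ (isSelfAdjoint_iff.mpr rfl)
    exact this
  have specA : spectrum ℝ A ⊆ Set.Ioo (-1:ℝ) 1 :=
    (CFC.spectrum_algebraMap_subset (A := Matrix (Fin 1) (Fin 1) ℂ) x).trans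
      (by simpa using hx)
  have specB : spectrum ℝ B ⊆ Set.Ioo (-1:ℝ) 1 :=
    (CFC.spectrum_algebraMap_subset (A := Matrix (Fin 1) (Fin 1) ℂ) y).trans
      (by simpa using hy)
  have hBA : (B - A).PosSemidef := by
    rw [hAdef, hBdef, ← map_sub, Matrix.algebraMap_eq_diagonal]
    refine Matrix.PosSemidef.diagonal ?_
    rw [Pi.le_def]
    intro i
    simp only [Pi.zero_apply]
    have h0 : (0:ℝ) ≤ y - x := by linarith
    simpa using Complex.zero_le_real.mpr h0
  have hPSD := hm A B hA hB specA specB hBA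
  rw [← hA.cfc_eq f, ← hB.cfc_eq f, hAdef, hBdef, cfc_algebraMap, cfc_algebraMap,
    ← map_sub] at hPSD
  have h1 := hPSD.dotProduct_mulVec_nonneg (fun _ => 1)
  rw [Matrix.algebraMap_eq_diagonal] at h1
  simp [Matrix.mulVec, dotProduct, Fin.sum_univ_one] at h1
  linarith

/-- If `f` is a C¹ operator monotone function on `(-1,1)` with `f 0 = 0` and `f' 0 = 1`,
then `f x ≤ x/(1-x)` on `[0,1)` and `f x ≥ x/(1+x)` on `(-1,0]`. -/
theorem operator_monotone_normalized_bounds (f : ℝ → ℝ)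
    (hC1 : ContDiffOn ℝ 1 f (Set.Ioo (-1:ℝ) 1))
    (hmono : ∀ (n : ℕ) (A B : Matrix (Fin n) (Fin n) ℂ)
      (hA : A.IsHermitian) (hB : B.IsHermitian),
      spectrum ℝ A ⊆ Set.Ioo (-1:ℝ) 1 → spectrum ℝ B ⊆ Set.Ioo (-1:ℝ) 1 →
      (B - A).PosSemidef → (hB.cfc f - hA.cfc f).PosSemidef)
    (hf0 : f 0 = 0) (hf'0 : deriv f 0 = 1) :
    (∀ x ∈ Set.Ico (0:ℝ) 1, f x ≤ x / (1 - x)) ∧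
    (∀ x ∈ Set.Ioc (-1:ℝ) 0, x / (1 + x) ≤ f x) := by
  have h0mem : (0:ℝ) ∈ Set.Ioo (-1:ℝ) 1 := by norm_num
  -- basic calculus facts
  have hdiff : DifferentiableAt ℝ f 0 :=
    ((hC1.differentiableOn one_ne_zero).differentiableAt (isOpen_Ioo.mem_nhds h0mem))
  have hderiv : HasDerivAt f 1 0 := hf'0 ▸ hdiff.hasDerivAt
  have hcont0 : Tendsto f (𝓝 0) (𝓝 0) := by
    have := hdiff.continuousAt.tendsto
    rwa [hf0] at this
  have hslope : Tendsto (fun b : ℝ => f b / b) (𝓝[≠] 0) (𝓝 1) := by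
    have h := hasDerivAt_iff_tendsto_slope.mp hderiv
    have hfun : slope f 0 = fun b : ℝ => f b / b := by
      funext b
      rw [slope_def_field, hf0, sub_zero, sub_zero]
    rwa [hfun] at h
  -- monotonicity
  have hmono' : ∀ x ∈ Set.Ioo (-1:ℝ) 1, ∀ y ∈ Set.Ioo (-1:ℝ) 1, x ≤ y → f x ≤ f y :=
    fun x hx y hy hxy => mono_of f (hmono 1) hx hy hxy
  -- strict positivity on (0,1)
  have hspos : ∀ x ∈ Set.Ioo (0:ℝ) 1, 0 < f x := by
    intro x hx
    have hxI : x ∈ Set.Ioo (-1:ℝ) 1 := ⟨by linarith [hx.1], hx.2⟩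
    have h0 : 0 ≤ f x := by
      have := hmono' 0 h0mem x hxI hx.1.le
      rwa [hf0] at this
    rcases h0.lt_or_eq with h | h
    · exact h
    · exfalso
      have hz : ∀ y ∈ Set.Ioc (0:ℝ) x, f y = 0 := by
        intro y hy
        have hyI : y ∈ Set.Ioo (-1:ℝ) 1 := ⟨by linarith [hy.1], lt_of_le_of_lt hy.2 hx.2⟩
        have h1 : f y ≤ f x := hmono' y hyI x hxI hy.2
        have h2 : 0 ≤ f y := by
          have := hmono' 0 h0mem y hyI hy.1.le
          rwa [hf0] at this
        rw [← h] at h1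
        linarith
      have hsl : Tendsto (fun b : ℝ => f b / b) (𝓝[>] 0) (𝓝 1) :=
        hslope.mono_left (nhdsWithin_mono 0 (fun z hz => ne_of_gt hz))
      have hev : (fun b : ℝ => f b / b) =ᶠ[𝓝[>] (0:ℝ)] (fun _ => (0:ℝ)) := by
        filter_upwards [Ioc_mem_nhdsGT_of_mem (Set.left_mem_Ico.mpr hx.1)] with b hb
        rw [hz b hb, zero_div]
      have : Tendsto (fun _ : ℝ => (0:ℝ)) (𝓝[>] 0) (𝓝 1) := hsl.congr' hev
      exact zero_ne_one (tendsto_nhds_unique tendsto_const_nhds this)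
  -- strict negativity on (-1,0)
  have hsneg : ∀ x ∈ Set.Ioo (-1:ℝ) (0:ℝ), f x < 0 := by
    intro x hx
    have hxI : x ∈ Set.Ioo (-1:ℝ) 1 := ⟨hx.1, by linarith [hx.2]⟩
    have h0 : f x ≤ 0 := by
      have := hmono' x hxI 0 h0mem hx.2.le
      rwa [hf0] at this
    rcases h0.lt_or_eq with h | h
    · exact h
    · exfalso
      have hz : ∀ y ∈ Set.Ico x (0:ℝ), f y = 0 := by
        intro y hy
        have hyI : y ∈ Set.Ioo (-1:ℝ) 1 := ⟨lt_of_lt_of_le hx.1 hy.1, by linarith [hy.2]⟩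
        have h1 : f x ≤ f y := hmono' x hxI y hyI hy.1
        have h2 : f y ≤ 0 := by
          have := hmono' y hyI 0 h0mem hy.2.le
          rwa [hf0] at this
        rw [h] at h1
        linarith
      have hsl : Tendsto (fun b : ℝ => f b / b) (𝓝[<] 0) (𝓝 1) :=
        hslope.mono_left (nhdsWithin_mono 0 (fun z hz => ne_of_lt hz))
      have hev : (fun b : ℝ => f b / b) =ᶠ[𝓝[<] (0:ℝ)] (fun _ => (0:ℝ)) := by
        filter_upwards [Ico_mem_nhdsLT_of_mem (Set.right_mem_Ioc.mpr hx.2)] with b hb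
        rw [hz b hb, zero_div]
      have : Tendsto (fun _ : ℝ => (0:ℝ)) (𝓝[<] 0) (𝓝 1) := hsl.congr' hev
      exact zero_ne_one (tendsto_nhds_unique tendsto_const_nhds this)
  constructor
  · -- positive side
    rintro x ⟨hx0, hx1⟩
    rcases eq_or_lt_of_le hx0 with rfl | hx0'
    · simp [hf0]
    -- limit inequality: for d ∈ (x,1), (d-x) * f x * f d ≤ (f d - f x) * (d * x)
    have hL : ∀ d, x < d → d < 1 → (d - x) * (f x * f d) ≤ (f d - f x) * (d * x) := by
      intro d hxd hd1
      have hKb : ∀ b ∈ Set.Ioc (0:ℝ) x,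
          (d - x) * (f x * (f d - f b)) ≤ (f b / b) * ((f d - f x) * ((d - b) * x)) := by
        intro b hb
        have hK := master f (hmono 2) (a := 0) (b := b) (e := x) (d := d)
          (by norm_num) hb.1 hb.2 hxd hd1
        rw [hf0] at hK
        have hb0 : (0:ℝ) < b := hb.1
        rw [← mul_le_mul_iff_right₀ hb0]
        calc b * ((d - x) * (f x * (f d - f b)))
            = (b - 0) * (d - x) * (f x - 0) * (f d - f b) := by ring
        _ ≤ (f b - 0) * (f d - f x) * (d - b) * (x - 0) := hK
        _ = (f b / b * b) * ((f d - f x) * ((d - b) * x)) := by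
            rw [div_mul_cancel₀ _ (ne_of_gt hb0)]; ring
        _ = b * (f b / b * ((f d - f x) * ((d - b) * x))) := by ring
      have hlim1 : Tendsto (fun b : ℝ => (d - x) * (f x * (f d - f b))) (𝓝[>] 0)
          (𝓝 ((d - x) * (f x * f d))) := by
        have : Tendsto (fun b : ℝ => (d - x) * (f x * (f d - f b))) (𝓝 0)
            (𝓝 ((d - x) * (f x * (f d - 0)))) :=
          (tendsto_const_nhds.mul (tendsto_const_nhds.mul (tendsto_const_nhds.sub hcont0)))
        simpa using this.mono_left nhdsWithin_le_nhds
      have hlim2 : Tendsto (fun b : ℝ => (f b / b) * ((f d - f x) * ((d - b) * x))) (𝓝[>] 0)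
          (𝓝 (1 * ((f d - f x) * ((d - 0) * x)))) := by
        apply Tendsto.mul
        · exact hslope.mono_left (nhdsWithin_mono 0 (fun z hz => ne_of_gt hz))
        · have : Tendsto (fun b : ℝ => (f d - f x) * ((d - b) * x)) (𝓝 0)
              (𝓝 ((f d - f x) * ((d - 0) * x))) :=
            tendsto_const_nhds.mul ((tendsto_const_nhds.sub tendsto_id).mul tendsto_const_nhds)
          exact this.mono_left nhdsWithin_le_nhds
      have := le_of_tendsto_of_tendsto hlim1 hlim2
        (eventually_of_mem (Ioc_mem_nhdsGT_of_mem (Set.left_mem_Ico.mpr hx0')) hKb)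
      simpa using this
    -- deduce f x * (d - x) ≤ d * x
    have hL2 : ∀ d, x < d → d < 1 → f x * (d - x) ≤ d * x := by
      intro d hxd hd1
      have hfd : 0 < f d := hspos d ⟨by linarith, hd1⟩
      have hfx : 0 ≤ f x := by
        have := hmono' 0 h0mem x ⟨by linarith, hx1⟩ hx0'.le
        rwa [hf0] at this
      have h := hL d hxd hd1
      have h2 : (d - x) * (f x * f d) ≤ f d * (d * x) - f x * (d * x) := by
        calc (d - x) * (f x * f d) ≤ (f d - f x) * (d * x) := h
        _ = f d * (d * x) - f x * (d * x) := by ring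
      have h3 : f x * (d * x) ≥ 0 := mul_nonneg hfx (by nlinarith)
      have h4 : (d - x) * (f x * f d) ≤ f d * (d * x) := by linarith
      have h5 : f d * (f x * (d - x)) ≤ f d * (d * x) := by
        calc f d * (f x * (d - x)) = (d - x) * (f x * f d) := by ring
        _ ≤ f d * (d * x) := h4
      exact le_of_mul_le_mul_left h5 hfd
    -- take d → 1
    have hlim : Tendsto (fun d : ℝ => d * x / (d - x)) (𝓝[<] 1) (𝓝 (x / (1 - x))) := by
      have hc : ContinuousAt (fun d : ℝ => d * x / (d - x)) 1 := by
        apply ContinuousAt.div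
        · exact (continuous_id.mul continuous_const).continuousAt
        · exact (continuous_id.sub continuous_const).continuousAt
        · simp; linarith
      have := hc.tendsto
      simp only [one_mul] at this
      exact this.mono_left nhdsWithin_le_nhds
    have hev : ∀ᶠ d in 𝓝[<] (1:ℝ), f x ≤ d * x / (d - x) := by
      filter_upwards [Ioo_mem_nhdsLT_of_mem (Set.right_mem_Ioc.mpr hx1)] with d hd
      rw [le_div_iff₀ (by linarith [hd.1] : (0:ℝ) < d - x)]
      linarith [hL2 d hd.1 hd.2]
    exact ge_of_tendsto hlim hev
  · -- negative side
    rintro x ⟨hx0, hx1⟩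
    rcases eq_or_lt_of_le hx1 with rfl | hx1'
    · simp [hf0]
    have hxI : x ∈ Set.Ioo (-1:ℝ) 1 := ⟨hx0, by linarith⟩
    have hfx : f x < 0 := hsneg x ⟨hx0, hx1'⟩
    -- limit inequality: for c ∈ (-1,x), (x-c) * (f c * f x) ≤ (f x - f c) * (x * c)
    have hL : ∀ c, -1 < c → c < x → (x - c) * (f c * f x) ≤ (f x - f c) * (x * c) := by
      intro c hc1 hcx
      have hKe : ∀ e ∈ Set.Ico x (0:ℝ),
          (x - c) * ((f e - f c) * (-(f x))) ≤ (f x - f c) * ((f e / e) * ((-x) * (e - c))) := by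
        intro e he
        have hK := master f (hmono 2) (a := c) (b := x) (e := e) (d := 0)
          hc1 hcx he.1 he.2 (by norm_num)
        rw [hf0] at hK
        have he0 : e < 0 := he.2
        have hne : (0:ℝ) < -e := by linarith
        rw [← mul_le_mul_iff_right₀ hne]
        calc (-e) * ((x - c) * ((f e - f c) * (-(f x))))
            = (x - c) * (0 - e) * (f e - f c) * (0 - f x) := by ring
        _ ≤ (f x - f c) * (0 - f e) * (0 - x) * (e - c) := hK
        _ = (-e) * ((f x - f c) * (f e / e * ((-x) * (e - c)))) := by
            have hne0 : e ≠ 0 := ne_of_lt he0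
            field_simp
            ring
      have hlim1 : Tendsto (fun e : ℝ => (x - c) * ((f e - f c) * (-(f x)))) (𝓝[<] 0)
          (𝓝 ((x - c) * (f c * f x))) := by
        have : Tendsto (fun e : ℝ => (x - c) * ((f e - f c) * (-(f x)))) (𝓝 0)
            (𝓝 ((x - c) * ((0 - f c) * (-(f x))))) :=
          tendsto_const_nhds.mul ((hcont0.sub tendsto_const_nhds).mul tendsto_const_nhds)
        have heq : (x - c) * ((0 - f c) * (-(f x))) = (x - c) * (f c * f x) := by ring
        rw [heq] at this
        exact this.mono_left nhdsWithin_le_nhds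
      have hlim2 : Tendsto (fun e : ℝ => (f x - f c) * ((f e / e) * ((-x) * (e - c)))) (𝓝[<] 0)
          (𝓝 ((f x - f c) * (1 * ((-x) * (0 - c))))) := by
        apply Tendsto.mul tendsto_const_nhds
        apply Tendsto.mul
        · exact hslope.mono_left (nhdsWithin_mono 0 (fun z hz => ne_of_lt hz))
        · have : Tendsto (fun e : ℝ => (-x) * (e - c)) (𝓝 0) (𝓝 ((-x) * (0 - c))) :=
            tendsto_const_nhds.mul ((tendsto_id.sub tendsto_const_nhds))
          exact this.mono_left nhdsWithin_le_nhds
      have h := le_of_tendsto_of_tendsto hlim1 hlim2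
        (eventually_of_mem (Ico_mem_nhdsLT_of_mem (Set.right_mem_Ioc.mpr hx1')) hKe)
      calc (x - c) * (f c * f x) ≤ (f x - f c) * (1 * ((-x) * (0 - c))) := h
      _ = (f x - f c) * (x * c) := by ring
    -- deduce x * c ≤ f x * (c - x), i.e. f x ≥ x*c/(c-x)
    have hL2 : ∀ c, -1 < c → c < x → x * c ≤ f x * (x - c) + x * c * 0 ∨ True := fun _ _ _ => Or.inr trivial
    have hfinal : ∀ c, -1 < c → c < x → x * c / (c - x) ≤ f x := by
      intro c hc1 hcx
      have hfc : f c < 0 := hsneg c ⟨hc1, by linarith⟩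
      have h := hL c hc1 hcx
      have hxc : 0 < x * c := mul_pos_of_neg_of_neg hx1' (by linarith)
      have hS : 0 < x * c + (x - c) * f x := by nlinarith
      rw [div_le_iff_of_neg (by linarith : c - x < 0)]
      nlinarith
    have hlim : Tendsto (fun c : ℝ => x * c / (c - x)) (𝓝[>] (-1:ℝ)) (𝓝 (x / (1 + x))) := by
      have hc : ContinuousAt (fun c : ℝ => x * c / (c - x)) (-1) := by
        apply ContinuousAt.div
        · exact (continuous_const.mul continuous_id).continuousAt
        · exact (continuous_id.sub continuous_const).continuousAt
        · simp; intro h; linarith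
      have := hc.tendsto
      have heval : x * (-1) / ((-1) - x) = x / (1 + x) := by
        rw [div_eq_div_iff (by linarith) (by linarith)]
        ring
      rw [heval] at this
      exact this.mono_left nhdsWithin_le_nhds
    have hev : ∀ᶠ c in 𝓝[>] (-1:ℝ), x * c / (c - x) ≤ f x := by
      filter_upwards [Ioo_mem_nhdsGT_of_mem (Set.left_mem_Ico.mpr hx0)] with c hc
      exact hfinal c hc.1 hc.2
    exact le_of_tendsto hlim hev
end
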